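/- arXiv:2507.16320 — 3 statements merged into one kernel-verified Lean document; each statement's English description precedes it below -/
import Mathlib

section
/- For variables x_1,…,x_n and y_1,…,y_m with |x_i y_j| < 1 for all i, j, the Cauchy identity holds: ∑_λ s_λ(x_1,…,x_n) s_λ(y_1,…,y_m) = ∏_{i=1}^n ∏_{j=1}^m 1/(1 - x_i y_j), where the sum is over all partitions λ with at most min(n,m) parts. -/
open Finset

/-- Interlacing of partitions (as row-length functions): `b/a` is a horizontal strip. -/
def Intl (a b : ℕ → ℕ) : Prop := (∀ k, a k ≤ b k) ∧ (∀ k, b (k + 1) ≤ a k)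

/-- Forward local growth rule. -/
def locF (ρ μ ν : ℕ → ℕ) (a : ℕ) : ℕ → ℕ
  | 0 => max (μ 0) (ν 0) + a
  | k + 1 => max (μ (k + 1)) (ν (k + 1)) + (min (μ k) (ν k) - ρ k)

def locA (μ ν lam : ℕ → ℕ) : ℕ := lam 0 - max (μ 0) (ν 0)

def locR (μ ν lam : ℕ → ℕ) (k : ℕ) : ℕ :=
  min (μ k) (ν k) + max (μ (k + 1)) (ν (k + 1)) - lam (k + 1)

section LocalRules
variable {ρ μ ν lam : ℕ → ℕ} {a : ℕ}

theorem locF_comm : locF ρ ν μ a = locF ρ μ ν a := by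
  funext j; cases j <;> simp only [locF, max_comm, min_comm]

theorem locF_intl_left (h1 : Intl ρ μ) (h2 : Intl ρ ν) : Intl μ (locF ρ μ ν a) := by
  constructor
  · intro k
    cases k with
    | zero => simp only [locF]; omega
    | succ k =>
      have C := h1.1 k; have D := h2.1 k
      simp only [locF]; omega
  · intro k
    have A := h1.2 k; have B := h2.2 k; have C := h1.1 k; have D := h2.1 k
    simp only [locF]; omega

theorem locF_intl_right (h1 : Intl ρ μ) (h2 : Intl ρ ν) : Intl ν (locF ρ μ ν a) := by
  rw [← locF_comm]; exact locF_intl_left h2 h1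

theorem locF_anti (h1 : Intl ρ μ) (h2 : Intl ρ ν) : Antitone (locF ρ μ ν a) := by
  apply antitone_nat_of_succ_le
  intro k
  have A := h1.2 k; have B := h2.2 k; have C := h1.1 k; have D := h2.1 k
  cases k with
  | zero => simp only [locF]; omega
  | succ k =>
    have A' := h1.2 (k+1); have B' := h2.2 (k+1)
    have C' := h1.1 (k+1); have D' := h2.1 (k+1)
    simp only [locF]; omega

theorem locF_succ_add (h1 : Intl ρ μ) (h2 : Intl ρ ν) (k : ℕ) :
    locF ρ μ ν a (k + 1) + ρ k = max (μ (k + 1)) (ν (k + 1)) + min (μ k) (ν k) := by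
  have C := h1.1 k; have D := h2.1 k
  simp only [locF]; omega

theorem locF_support (s : ℕ)
    (hμν : ∀ k, s ≤ k → μ k = 0 ∨ ν k = 0)
    (hμ : ∀ k, s + 1 ≤ k → μ k = 0) (hν : ∀ k, s + 1 ≤ k → ν k = 0) :
    ∀ k, s + 1 ≤ k → locF ρ μ ν a k = 0 := by
  intro k hk
  obtain ⟨k, rfl⟩ : ∃ k', k = k' + 1 := ⟨k - 1, by omega⟩
  have := hμν k (by omega)
  have := hμ (k+1) (by omega)
  have := hν (k+1) (by omega)
  simp only [locF]; omega

theorem locR_intl_left (h1 : Intl μ lam) (h2 : Intl ν lam) : Intl (locR μ ν lam) μ := by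
  constructor
  · intro k
    have A := h1.1 (k+1); have B := h2.1 (k+1); have C := h1.2 k; have D := h2.2 k
    simp only [locR]; omega
  · intro k
    have A := h1.1 (k+1); have B := h2.1 (k+1); have C := h1.2 k; have D := h2.2 k
    simp only [locR]; omega

theorem locR_comm : locR ν μ lam = locR μ ν lam := by
  funext k; simp only [locR, max_comm, min_comm]

theorem locR_intl_right (h1 : Intl μ lam) (h2 : Intl ν lam) : Intl (locR μ ν lam) ν := by
  rw [← locR_comm]; exact locR_intl_left h2 h1

theorem locF_locR (h1 : Intl μ lam) (h2 : Intl ν lam) :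
    locF (locR μ ν lam) μ ν (locA μ ν lam) = lam := by
  funext k
  cases k with
  | zero =>
    have A := h1.1 0; have B := h2.1 0
    simp only [locF, locA]; omega
  | succ k =>
    have A := h1.1 (k+1); have B := h2.1 (k+1); have C := h1.2 k; have D := h2.2 k
    simp only [locF, locR]; omega

theorem locR_locF (h1 : Intl ρ μ) (h2 : Intl ρ ν) :
    locR μ ν (locF ρ μ ν a) = ρ := by
  funext k
  have A := h1.2 k; have B := h2.2 k; have C := h1.1 k; have D := h2.1 k
  simp only [locR, locF]; omega

theorem locA_locF : locA μ ν (locF ρ μ ν a) = a := by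
  simp only [locA, locF]; omega

end LocalRules

/-! ### The growth grid -/

def grid (A : ℕ → ℕ → ℕ) : ℕ → ℕ → ℕ → ℕ
  | 0, _ => fun _ => 0
  | _ + 1, 0 => fun _ => 0
  | i + 1, j + 1 => locF (grid A i j) (grid A (i + 1) j) (grid A i (j + 1)) (A i j)

theorem grid_zero_left (A : ℕ → ℕ → ℕ) (j : ℕ) : grid A 0 j = fun _ => 0 := by
  simp [grid]

theorem grid_zero_right (A : ℕ → ℕ → ℕ) (i : ℕ) : grid A i 0 = fun _ => 0 := by
  cases i <;> simp [grid]

theorem grid_succ (A : ℕ → ℕ → ℕ) (i j : ℕ) :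
    grid A (i + 1) (j + 1) = locF (grid A i j) (grid A (i + 1) j) (grid A i (j + 1)) (A i j) := by
  simp [grid]

theorem intl_zero_fun {b : ℕ → ℕ} : Intl (fun _ => 0) b ↔ ∀ k, b (k + 1) = 0 := by
  constructor
  · intro h k; simpa using h.2 k
  · intro h; exact ⟨fun k => Nat.zero_le _, fun k => le_of_eq (h k)⟩

theorem grid_support (A : ℕ → ℕ → ℕ) : ∀ i j k, min i j ≤ k → grid A i j k = 0 := by
  have key : ∀ s i j, i + j ≤ s → ∀ k, min i j ≤ k → grid A i j k = 0 := by
    intro s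
    induction s with
    | zero => intro i j hij k _
              obtain ⟨rfl, rfl⟩ : i = 0 ∧ j = 0 := by omega
              rw [grid_zero_left]
    | succ s ih =>
      intro i j hij k hk
      match i, j with
      | 0, j => rw [grid_zero_left]
      | i + 1, 0 => rw [grid_zero_right]
      | i + 1, j + 1 =>
        rw [grid_succ]
        have hmin : min (i + 1) (j + 1) = min i j + 1 := by omega
        refine locF_support (min i j) ?_ ?_ ?_ k (by omega)
        · intro k' hk'
          rcases le_or_gt (i + 1) j with hij' | hij'
          · right; exact ih i (j+1) (by omega) k' (by omega)
          · left; exact ih (i+1) j (by omega) k' (by omega)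
        · intro k' hk'; exact ih (i+1) j (by omega) k' (by omega)
        · intro k' hk'; exact ih i (j+1) (by omega) k' (by omega)
  exact fun i j k hk => key (i + j) i j le_rfl k hk

theorem grid_intl (A : ℕ → ℕ → ℕ) :
    ∀ i j, Intl (grid A i j) (grid A (i + 1) j) ∧ Intl (grid A i j) (grid A i (j + 1)) := by
  have key : ∀ s i j, i + j ≤ s →
      Intl (grid A i j) (grid A (i + 1) j) ∧ Intl (grid A i j) (grid A i (j + 1)) := by
    intro s
    induction s with
    | zero =>
      intro i j hij
      obtain ⟨rfl, rfl⟩ : i = 0 ∧ j = 0 := by omega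
      constructor
      · rw [grid_zero_right, grid_zero_right]; exact ⟨fun _ => le_rfl, fun _ => le_rfl⟩
      · rw [grid_zero_left, grid_zero_left]; exact ⟨fun _ => le_rfl, fun _ => le_rfl⟩
    | succ s ih =>
      intro i j hij
      constructor
      · -- Intl (grid A i j) (grid A (i+1) j)
        match i, j with
        | i, 0 =>
          rw [grid_zero_right, grid_zero_right]; exact ⟨fun _ => le_rfl, fun _ => le_rfl⟩
        | 0, j + 1 =>
          rw [grid_zero_left, intl_zero_fun]
          intro k
          exact grid_support A 1 (j+1) (k+1) (by omega)
        | i + 1, j + 1 =>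
          rw [grid_succ A (i+1) j]
          exact locF_intl_right (ih (i+1) j (by omega)).1 (ih (i+1) j (by omega)).2
      · match i, j with
        | 0, j =>
          rw [grid_zero_left, grid_zero_left]; exact ⟨fun _ => le_rfl, fun _ => le_rfl⟩
        | i + 1, 0 =>
          rw [grid_zero_right, intl_zero_fun]
          intro k
          exact grid_support A (i+1) 1 (k+1) (by omega)
        | i + 1, j + 1 =>
          rw [grid_succ A i (j+1)]
          exact locF_intl_left (ih i (j+1) (by omega)).1 (ih i (j+1) (by omega)).2
  exact fun i j => key (i + j) i j le_rfl

theorem grid_anti (A : ℕ → ℕ → ℕ) (i j : ℕ) : Antitone (grid A i j) := by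
  match i, j with
  | 0, j => rw [grid_zero_left]; exact antitone_const
  | i + 1, 0 => rw [grid_zero_right]; exact antitone_const
  | i + 1, j + 1 =>
    rw [grid_succ]
    exact locF_anti (grid_intl A i j).1 (grid_intl A i j).2

/-- Partition size restricted to the first `R` rows. -/
def psize (R : ℕ) (f : ℕ → ℕ) : ℕ := ∑ k ∈ Finset.range R, f k

theorem locF_psize {ρ μ ν : ℕ → ℕ} {a : ℕ} (h1 : Intl ρ μ) (h2 : Intl ρ ν) (R : ℕ)
    (hρ : ρ R = 0) (hμν : min (μ R) (ν R) = 0) :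
    psize (R + 1) (locF ρ μ ν a) + psize (R + 1) ρ = a + psize (R + 1) μ + psize (R + 1) ν := by
  have e1 : psize (R + 1) (locF ρ μ ν a)
      = ∑ k ∈ Finset.range R, locF ρ μ ν a (k + 1) + locF ρ μ ν a 0 :=
    Finset.sum_range_succ' _ R
  have e2 : psize (R + 1) ρ = ∑ k ∈ Finset.range R, ρ k := by
    rw [psize, Finset.sum_range_succ, hρ]; omega
  have e3 : ∑ k ∈ Finset.range R, locF ρ μ ν a (k + 1) + ∑ k ∈ Finset.range R, ρ k
      = ∑ k ∈ Finset.range R, max (μ (k + 1)) (ν (k + 1))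
        + ∑ k ∈ Finset.range R, min (μ k) (ν k) := by
    rw [← Finset.sum_add_distrib, ← Finset.sum_add_distrib]
    exact Finset.sum_congr rfl fun k _ => locF_succ_add h1 h2 k
  have e4 : ∑ k ∈ Finset.range R, max (μ (k + 1)) (ν (k + 1)) + max (μ 0) (ν 0)
      = ∑ k ∈ Finset.range (R + 1), max (μ k) (ν k) :=
    (Finset.sum_range_succ' (fun k => max (μ k) (ν k)) R).symm
  have e5 : ∑ k ∈ Finset.range R, min (μ k) (ν k)
      = ∑ k ∈ Finset.range (R + 1), min (μ k) (ν k) := by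
    rw [Finset.sum_range_succ, hμν]; omega
  have e6 : ∑ k ∈ Finset.range (R + 1), max (μ k) (ν k)
      + ∑ k ∈ Finset.range (R + 1), min (μ k) (ν k)
      = psize (R + 1) μ + psize (R + 1) ν := by
    rw [← Finset.sum_add_distrib]
    unfold psize
    rw [← Finset.sum_add_distrib]
    exact Finset.sum_congr rfl fun k _ => by omega
  have e0 : locF ρ μ ν a 0 = max (μ 0) (ν 0) + a := rfl
  omega

/-! ### Telescoping sums over the grid -/

theorem grid_psize_row (A : ℕ → ℕ → ℕ) (n m : ℕ) (i : ℕ) (hi : i + 1 ≤ n) :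
    ∀ j, j ≤ m → psize (min n m + 1) (grid A (i + 1) j)
      = psize (min n m + 1) (grid A i j) + ∑ j' ∈ Finset.range j, A i j' := by
  intro j
  induction j with
  | zero => intro _; rw [grid_zero_right, grid_zero_right]; simp
  | succ j ih =>
    intro hj
    have hij := ih (by omega)
    have key := locF_psize (a := A i j) (grid_intl A i j).1 (grid_intl A i j).2 (min n m)
      (grid_support A i j _ (by omega))
      (by rw [grid_support A (i+1) j _ (by omega)]; simp)
    rw [grid_succ, Finset.sum_range_succ]
    omega

theorem grid_psize_col (A : ℕ → ℕ → ℕ) (n m : ℕ) (j : ℕ) (hj : j + 1 ≤ m) :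
    ∀ i, i ≤ n → psize (min n m + 1) (grid A i (j + 1))
      = psize (min n m + 1) (grid A i j) + ∑ i' ∈ Finset.range i, A i' j := by
  intro i
  induction i with
  | zero => intro _; rw [grid_zero_left, grid_zero_left]; simp
  | succ i ih =>
    intro hi
    have hij := ih (by omega)
    have key := locF_psize (a := A i j) (grid_intl A i j).1 (grid_intl A i j).2 (min n m)
      (grid_support A i j _ (by omega))
      (by rw [grid_support A (i+1) j _ (by omega)]; simp)
    rw [grid_succ, Finset.sum_range_succ]
    omega

theorem grid_congr {A A' : ℕ → ℕ → ℕ} {n m : ℕ}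
    (hAA : ∀ i j, i < n → j < m → A i j = A' i j) :
    ∀ i j, i ≤ n → j ≤ m → grid A i j = grid A' i j := by
  have key : ∀ s i j, i + j ≤ s → i ≤ n → j ≤ m → grid A i j = grid A' i j := by
    intro s
    induction s with
    | zero =>
      intro i j h _ _
      obtain ⟨rfl, rfl⟩ : i = 0 ∧ j = 0 := by omega
      rw [grid_zero_left, grid_zero_left]
    | succ s ih =>
      intro i j hs hi hj
      match i, j with
      | 0, j => rw [grid_zero_left, grid_zero_left]
      | i + 1, 0 => rw [grid_zero_right, grid_zero_right]
      | i + 1, j + 1 =>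
        rw [grid_succ, grid_succ, ih i j (by omega) (by omega) (by omega),
          ih (i+1) j (by omega) (by omega) (by omega),
          ih i (j+1) (by omega) (by omega) (by omega), hAA i j (by omega) (by omega)]
  exact fun i j => key (i + j) i j le_rfl

/-! ### The reverse grid -/

def rgrid (n m : ℕ) (P Q : ℕ → ℕ → ℕ) : ℕ → ℕ → ℕ → ℕ
  | 0, dj => P (m - dj)
  | di + 1, 0 => Q (n - (di + 1))
  | di + 1, dj + 1 =>
    locR (rgrid n m P Q di (dj + 1)) (rgrid n m P Q (di + 1) dj) (rgrid n m P Q di dj)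

theorem rgrid_zero (n m : ℕ) (P Q : ℕ → ℕ → ℕ) (dj : ℕ) :
    rgrid n m P Q 0 dj = P (m - dj) := by simp [rgrid]

theorem rgrid_succ_zero (n m : ℕ) (P Q : ℕ → ℕ → ℕ) (di : ℕ) :
    rgrid n m P Q (di + 1) 0 = Q (n - (di + 1)) := by simp [rgrid]

theorem rgrid_succ (n m : ℕ) (P Q : ℕ → ℕ → ℕ) (di dj : ℕ) :
    rgrid n m P Q (di + 1) (dj + 1) =
      locR (rgrid n m P Q di (dj + 1)) (rgrid n m P Q (di + 1) dj) (rgrid n m P Q di dj) := by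
  simp [rgrid]

section RGrid

variable {n m : ℕ} {P Q : ℕ → ℕ → ℕ}
  (hP : ∀ j, Intl (P j) (P (j + 1))) (hQ : ∀ i, Intl (Q i) (Q (i + 1)))
  (hPQ : P m = Q n)

include hP hQ hPQ in
theorem rgrid_intl : ∀ di dj,
    (di + 1 ≤ n → dj ≤ m → Intl (rgrid n m P Q (di + 1) dj) (rgrid n m P Q di dj)) ∧
    (di ≤ n → dj + 1 ≤ m → Intl (rgrid n m P Q di (dj + 1)) (rgrid n m P Q di dj)) := by
  have key : ∀ s di dj, di + dj ≤ s →
      (di + 1 ≤ n → dj ≤ m → Intl (rgrid n m P Q (di + 1) dj) (rgrid n m P Q di dj)) ∧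
      (di ≤ n → dj + 1 ≤ m → Intl (rgrid n m P Q di (dj + 1)) (rgrid n m P Q di dj)) := by
    intro s
    induction s with
    | zero =>
      intro di dj h
      obtain ⟨rfl, rfl⟩ : di = 0 ∧ dj = 0 := by omega
      constructor
      · intro h1 _
        rw [rgrid_succ_zero, rgrid_zero, Nat.sub_zero, hPQ]
        have := hQ (n - 1)
        rwa [Nat.sub_add_cancel (by omega)] at this
      · intro _ h2
        rw [rgrid_zero, rgrid_zero, Nat.sub_zero]
        have := hP (m - 1)
        rwa [Nat.sub_add_cancel (by omega)] at this
    | succ s ih =>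
      intro di dj hs
      constructor
      · intro hdi hdj
        match dj with
        | 0 =>
          rw [rgrid_succ_zero]
          have e : rgrid n m P Q di 0 = Q (n - di) := by
            match di with
            | 0 => rw [rgrid_zero, Nat.sub_zero, Nat.sub_zero, hPQ]
            | d + 1 => rw [rgrid_succ_zero]
          rw [e]
          have := hQ (n - (di + 1))
          rwa [show n - (di + 1) + 1 = n - di by omega] at this
        | d + 1 =>
          rw [rgrid_succ]
          exact locR_intl_left ((ih di d (by omega)).2 (by omega) (by omega))
            ((ih di d (by omega)).1 (by omega) (by omega))
      · intro hdi hdj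
        match di with
        | 0 =>
          rw [rgrid_zero, rgrid_zero]
          have := hP (m - (dj + 1))
          rwa [show m - (dj + 1) + 1 = m - dj by omega] at this
        | d + 1 =>
          rw [rgrid_succ]
          exact locR_intl_right ((ih d dj (by omega)).2 (by omega) (by omega))
            ((ih d dj (by omega)).1 (by omega) (by omega))
  exact fun di dj => key (di + dj) di dj le_rfl


include hP hQ hPQ in
theorem rgrid_top_edge (hQ0 : Q 0 = fun _ => 0) :
    ∀ dj, dj ≤ m → rgrid n m P Q n dj = fun _ => 0 := by
  have hmono : ∀ j j', j ≤ j' → ∀ k, P j k ≤ P j' k := by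
    intro j j' hjj
    induction j' with
    | zero => intro k; rw [Nat.le_zero.mp hjj]
    | succ j' ih =>
      rcases Nat.lt_or_ge j (j' + 1) with h' | h'
      · intro k; exact le_trans (ih (by omega) k) ((hP j').1 k)
      · intro k; rw [show j = j' + 1 by omega]
  intro dj
  induction dj with
  | zero =>
    intro _
    match n with
    | 0 => rw [rgrid_zero, Nat.sub_zero, hPQ, hQ0]
    | n' + 1 => rw [rgrid_succ_zero, Nat.sub_self, hQ0]
  | succ dj ih =>
    intro hdj
    have hIntl := (rgrid_intl hP hQ hPQ n dj).2 le_rfl hdj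
    rw [ih (by omega)] at hIntl
    funext k
    have := hIntl.1 k
    simpa using this

include hP hQ hPQ in
theorem rgrid_left_edge (hP0 : P 0 = fun _ => 0) :
    ∀ di, di ≤ n → rgrid n m P Q di m = fun _ => 0 := by
  intro di
  induction di with
  | zero => rw [rgrid_zero, Nat.sub_self, hP0]; intro _; rfl
  | succ di ih =>
    intro hdi
    have hIntl := (rgrid_intl hP hQ hPQ di m).1 hdi le_rfl
    rw [ih (by omega)] at hIntl
    funext k
    have := hIntl.1 k
    simpa using this

/-- Matrix entries reconstructed from a pair of chains. -/
def matOf (n m : ℕ) (P Q : ℕ → ℕ → ℕ) (i j : ℕ) : ℕ :=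
  locA (rgrid n m P Q (n - i - 1) (m - j)) (rgrid n m P Q (n - i) (m - j - 1))
    (rgrid n m P Q (n - i - 1) (m - j - 1))

/-- The reverse grid of the edge chains of a forward grid recovers the grid. -/
theorem rgrid_eq_grid (A : ℕ → ℕ → ℕ) {n m : ℕ} :
    ∀ di dj, di ≤ n → dj ≤ m →
      rgrid n m (fun j => grid A n j) (fun i => grid A i m) di dj = grid A (n - di) (m - dj) := by
  have key : ∀ s di dj, di + dj ≤ s → di ≤ n → dj ≤ m →
      rgrid n m (fun j => grid A n j) (fun i => grid A i m) di dj
        = grid A (n - di) (m - dj) := by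
    intro s
    induction s with
    | zero =>
      intro di dj h _ _
      obtain ⟨rfl, rfl⟩ : di = 0 ∧ dj = 0 := by omega
      rw [rgrid_zero]; simp
    | succ s ih =>
      intro di dj hs hdi hdj
      match di, dj with
      | 0, dj => rw [rgrid_zero]; simp
      | di + 1, 0 => rw [rgrid_succ_zero, Nat.sub_zero]
      | di + 1, dj + 1 =>
        rw [rgrid_succ, ih di (dj+1) (by omega) (by omega) (by omega),
          ih (di+1) dj (by omega) (by omega) (by omega),
          ih di dj (by omega) (by omega) (by omega)]
        set i := n - di - 1 with hi
        set j := m - dj - 1 with hj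
        have e1 : n - di = i + 1 := by omega
        have e2 : m - dj = j + 1 := by omega
        have e3 : n - (di + 1) = i := by omega
        have e4 : m - (dj + 1) = j := by omega
        rw [e1, e2, e3, e4, grid_succ]
        exact locR_locF (grid_intl A i j).1 (grid_intl A i j).2
  exact fun di dj => key (di + dj) di dj le_rfl

/-- The matrix reconstructed from the edge chains of a forward grid recovers the matrix. -/
theorem matOf_grid (A : ℕ → ℕ → ℕ) {n m : ℕ} (i j : ℕ) (hi : i < n) (hj : j < m) :
    matOf n m (fun j => grid A n j) (fun i => grid A i m) i j = A i j := by
  unfold matOf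
  rw [rgrid_eq_grid A (n - i - 1) (m - j) (by omega) (by omega),
    rgrid_eq_grid A (n - i) (m - j - 1) (by omega) (by omega),
    rgrid_eq_grid A (n - i - 1) (m - j - 1) (by omega) (by omega)]
  have e1 : n - (n - i - 1) = i + 1 := by omega
  have e2 : m - (m - j) = j := by omega
  have e3 : n - (n - i) = i := by omega
  have e4 : m - (m - j - 1) = j + 1 := by omega
  have e5 : m - (m - j - 1) = j + 1 := by omega
  rw [e1, e2, e3, e4, grid_succ, locA_locF]

include hP hQ hPQ in
theorem grid_matOf (hP0 : P 0 = fun _ => 0) (hQ0 : Q 0 = fun _ => 0) :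
    ∀ i j, i ≤ n → j ≤ m → grid (matOf n m P Q) i j = rgrid n m P Q (n - i) (m - j) := by
  have key : ∀ s i j, i + j ≤ s → i ≤ n → j ≤ m →
      grid (matOf n m P Q) i j = rgrid n m P Q (n - i) (m - j) := by
    intro s
    induction s with
    | zero =>
      intro i j h _ _
      obtain ⟨rfl, rfl⟩ : i = 0 ∧ j = 0 := by omega
      rw [grid_zero_left, Nat.sub_zero, Nat.sub_zero,
        rgrid_top_edge hP hQ hPQ hQ0 m le_rfl]
    | succ s ih =>
      intro i j hs hi hj
      match i, j with
      | 0, j =>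
        rw [grid_zero_left, Nat.sub_zero, (rgrid_top_edge hP hQ hPQ hQ0 (m - j) (by omega))]
      | i + 1, 0 =>
        rw [grid_zero_right, Nat.sub_zero, rgrid_left_edge hP hQ hPQ hP0 (n - (i+1)) (by omega)]
      | i + 1, j + 1 =>
        rw [grid_succ, ih i j (by omega) (by omega) (by omega),
          ih (i+1) j (by omega) (by omega) (by omega),
          ih i (j+1) (by omega) (by omega) (by omega)]
        obtain ⟨di, e1⟩ : ∃ di, n - i = di + 1 := ⟨n - i - 1, by omega⟩
        obtain ⟨dj, e2⟩ : ∃ dj, m - j = dj + 1 := ⟨m - j - 1, by omega⟩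
        have e3 : n - (i + 1) = di := by omega
        have e4 : m - (j + 1) = dj := by omega
        have eB : matOf n m P Q i j
            = locA (rgrid n m P Q di (dj + 1)) (rgrid n m P Q (di + 1) dj)
                (rgrid n m P Q di dj) := by
          unfold matOf
          rw [show n - i - 1 = di from by omega, show m - j - 1 = dj from by omega, e1, e2]
        rw [e1, e2, e3, e4, eB, rgrid_succ]
        exact locF_locR ((rgrid_intl hP hQ hPQ di dj).2 (by omega) (by omega))
          ((rgrid_intl hP hQ hPQ di dj).1 (by omega) (by omega))
  exact fun i j => key (i + j) i j le_rfl

end RGrid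

/-! ### Tableaux with bounded entries, and their chains -/

abbrev SSYTb (μ : YoungDiagram) (n : ℕ) :=
  {T : SemistandardYoungTableau μ // ∀ c ∈ μ.cells, T.entry c.1 c.2 < n}

def IsChainT (μ : YoungDiagram) (n : ℕ) (c : ℕ → ℕ → ℕ) : Prop :=
  (∀ k, Intl (c k) (c (k + 1))) ∧ (c 0 = fun _ => 0) ∧ (∀ k, n ≤ k → c k = μ.rowLen)

def ChainT (μ : YoungDiagram) (n : ℕ) := {c : ℕ → ℕ → ℕ // IsChainT μ n c}

theorem nat_le_of_lt_imp {a b : ℕ} (h : ∀ j, j < a → j < b) : a ≤ b := by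
  by_contra hc
  exact absurd (h b (by omega)) (by omega)

theorem nat_eq_of_lt_iff {a b : ℕ} (h : ∀ j, j < a ↔ j < b) : a = b :=
  le_antisymm (nat_le_of_lt_imp fun j hj => (h j).mp hj)
    (nat_le_of_lt_imp fun j hj => (h j).mpr hj)

theorem chain_mono {μ : YoungDiagram} {n : ℕ} {c : ℕ → ℕ → ℕ} (hc : IsChainT μ n c)
    {k k' : ℕ} (hk : k ≤ k') (i : ℕ) : c k i ≤ c k' i := by
  induction k' with
  | zero => rw [Nat.le_zero.mp hk]
  | succ k' ih =>
    rcases Nat.lt_or_ge k (k' + 1) with h' | h'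
    · exact le_trans (ih (by omega)) ((hc.1 k').1 i)
    · rw [show k = k' + 1 by omega]

theorem chain_le_rowLen {μ : YoungDiagram} {n : ℕ} {c : ℕ → ℕ → ℕ} (hc : IsChainT μ n c)
    (k i : ℕ) : c k i ≤ μ.rowLen i := by
  rcases le_or_gt k n with h | h
  · calc c k i ≤ c n i := chain_mono hc h i
      _ = μ.rowLen i := by rw [hc.2.2 n le_rfl]
  · rw [hc.2.2 k (by omega)]

/-! #### From tableaux to chains -/

/-- `chOf T k i` = number of entries `< k` in row `i` of `T`. -/
def chOf {μ : YoungDiagram} (T : SemistandardYoungTableau μ) (k i : ℕ) : ℕ :=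
  Nat.find (⟨μ.rowLen i, Or.inl le_rfl⟩ : ∃ j, μ.rowLen i ≤ j ∨ k ≤ T i j)

theorem lt_chOf_iff {μ : YoungDiagram} (T : SemistandardYoungTableau μ) (k i j : ℕ) :
    j < chOf T k i ↔ j < μ.rowLen i ∧ T i j < k := by
  rw [chOf, Nat.lt_find_iff]
  constructor
  · intro h
    have := h j le_rfl
    push_neg at this
    omega
  · rintro ⟨h1, h2⟩ j' hj'
    push_neg
    refine ⟨by omega, ?_⟩
    calc T i j' ≤ T i j := T.row_weak_of_le hj' (YoungDiagram.mem_iff_lt_rowLen.mpr h1)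
      _ < k := h2

theorem chOf_le_rowLen {μ : YoungDiagram} (T : SemistandardYoungTableau μ) (k i : ℕ) :
    chOf T k i ≤ μ.rowLen i :=
  Nat.find_min' _ (Or.inl le_rfl)

theorem chOf_isChainT {μ : YoungDiagram} {n : ℕ} (T : SemistandardYoungTableau μ)
    (hT : ∀ c ∈ μ.cells, T.entry c.1 c.2 < n) : IsChainT μ n (fun k => chOf T k) := by
  refine ⟨fun k => ⟨fun i => ?_, fun i => ?_⟩, ?_, fun k hk => ?_⟩
  · exact nat_le_of_lt_imp fun j hj => by
      rw [lt_chOf_iff] at hj ⊢; omega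
  · apply nat_le_of_lt_imp
    intro j hj
    rw [lt_chOf_iff] at hj ⊢
    have hcell : (i + 1, j) ∈ μ := YoungDiagram.mem_iff_lt_rowLen.mpr hj.1
    have h1 : T i j < T (i + 1) j := T.col_strict (by omega) hcell
    exact ⟨lt_of_lt_of_le hj.1 (μ.rowLen_anti i (i + 1) (by omega)), by omega⟩
  · funext i
    have : chOf T 0 i = 0 := by
      by_contra hc
      have := (lt_chOf_iff T 0 i 0).mp (by omega)
      omega
    simpa using this
  · funext i
    refine nat_eq_of_lt_iff fun j => ?_
    rw [lt_chOf_iff]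
    constructor
    · intro h; exact h.1
    · intro h
      refine ⟨h, lt_of_lt_of_le ?_ hk⟩
      exact hT (i, j) (by simpa [YoungDiagram.mem_cells] using YoungDiagram.mem_iff_lt_rowLen.mpr h)

def chainOf {μ : YoungDiagram} {n : ℕ} (T : SSYTb μ n) : ChainT μ n :=
  ⟨fun k => chOf T.1 k, chOf_isChainT T.1 T.2⟩

/-! #### From chains to tableaux -/

def entOf (μ : YoungDiagram) (n : ℕ) (c : ℕ → ℕ → ℕ) (i j : ℕ) : ℕ :=
  if (i, j) ∈ μ then Nat.find (⟨n, Or.inl le_rfl⟩ : ∃ k, n ≤ k ∨ j < c (k + 1) i) else 0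

theorem lt_entOf_iff {μ : YoungDiagram} {n : ℕ} {c : ℕ → ℕ → ℕ} (hc : IsChainT μ n c)
    {i j : ℕ} (hcell : (i, j) ∈ μ) (k : ℕ) :
    k < entOf μ n c i j ↔ k < n ∧ c (k + 1) i ≤ j := by
  rw [entOf, if_pos hcell, Nat.lt_find_iff]
  constructor
  · intro h
    have := h k le_rfl
    push_neg at this
    omega
  · rintro ⟨h1, h2⟩ k' hk'
    push_neg
    exact ⟨by omega, le_trans (chain_mono hc (by omega) i) h2⟩

theorem entOf_lt {μ : YoungDiagram} {n : ℕ} {c : ℕ → ℕ → ℕ} (hc : IsChainT μ n c)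
    {i j : ℕ} (hcell : (i, j) ∈ μ) : entOf μ n c i j < n := by
  have hrow : j < μ.rowLen i := YoungDiagram.mem_iff_lt_rowLen.mp hcell
  rcases Nat.eq_zero_or_pos n with rfl | hn
  · exfalso
    have h0 := hc.2.2 0 le_rfl
    have := congrFun (hc.2.1.symm.trans h0) i
    omega
  · have : entOf μ n c i j ≤ n - 1 := by
      rw [entOf, if_pos hcell]
      apply Nat.find_min'
      right
      rw [show n - 1 + 1 = n by omega, hc.2.2 n le_rfl]
      exact hrow
    omega

theorem entOf_col_succ {μ : YoungDiagram} {n : ℕ} {c : ℕ → ℕ → ℕ} (hc : IsChainT μ n c)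
    {i j : ℕ} (hcell : (i + 1, j) ∈ μ) : entOf μ n c i j < entOf μ n c (i + 1) j := by
  have hcell' : (i, j) ∈ μ := μ.up_left_mem (by omega) le_rfl hcell
  have htn : entOf μ n c (i + 1) j < n := entOf_lt hc hcell
  have ht2 : j < c (entOf μ n c (i + 1) j + 1) (i + 1) := by
    by_contra hcon
    have := (lt_entOf_iff hc hcell (k := entOf μ n c (i + 1) j)).mpr ⟨htn, by omega⟩
    omega
  obtain ⟨t, ht⟩ : ∃ t, entOf μ n c (i + 1) j = t := ⟨_, rfl⟩
  rw [ht] at htn ht2 ⊢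
  cases t with
  | zero =>
    exfalso
    have h1 : c (0 + 1) (i + 1) ≤ c 0 i := (hc.1 0).2 i
    have h0 : c 0 i = 0 := by rw [hc.2.1]
    omega
  | succ t' =>
    have hch : c (t' + 1 + 1) (i + 1) ≤ c (t' + 1) i := (hc.1 (t' + 1)).2 i
    have : ¬ (t' < entOf μ n c i j) := by
      rw [lt_entOf_iff hc hcell']
      push_neg
      intro _
      omega
    omega

theorem entOf_col_strict {μ : YoungDiagram} {n : ℕ} {c : ℕ → ℕ → ℕ} (hc : IsChainT μ n c)
    {i1 i2 j : ℕ} (h : i1 < i2) (hcell : (i2, j) ∈ μ) :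
    entOf μ n c i1 j < entOf μ n c i2 j := by
  induction i2 with
  | zero => omega
  | succ i2 ih =>
    rcases Nat.lt_or_ge i1 i2 with h' | h'
    · exact lt_trans (ih h' (μ.up_left_mem (by omega) le_rfl hcell)) (entOf_col_succ hc hcell)
    · rw [show i1 = i2 by omega]
      exact entOf_col_succ hc hcell

def tabOf {μ : YoungDiagram} {n : ℕ} (c : ChainT μ n) : SSYTb μ n := by
  refine ⟨⟨entOf μ n c.1, ?_, ?_, ?_⟩, ?_⟩
  · intro i j1 j2 hj hcell
    have hcell' : (i, j1) ∈ μ := μ.up_left_mem le_rfl (by omega) hcell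
    apply nat_le_of_lt_imp
    intro k hk
    rw [lt_entOf_iff c.2 hcell'] at hk
    rw [lt_entOf_iff c.2 hcell]
    omega
  · intro i1 i2 j h hcell
    exact entOf_col_strict c.2 h hcell
  · intro i j hcell
    rw [entOf, if_neg hcell]
  · intro cc hcc
    exact entOf_lt c.2 (by simpa using hcc)

theorem tabOf_chainOf {μ : YoungDiagram} {n : ℕ} (T : SSYTb μ n) : tabOf (chainOf T) = T := by
  apply Subtype.ext
  apply SemistandardYoungTableau.ext
  intro i j
  show entOf μ n (chainOf T).1 i j = T.1 i j
  by_cases hcell : (i, j) ∈ μ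
  · refine nat_eq_of_lt_iff fun k => ?_
    rw [lt_entOf_iff (chainOf T).2 hcell,
      show (chainOf T).1 (k + 1) i = chOf T.1 (k + 1) i from rfl]
    have hrow : j < μ.rowLen i := YoungDiagram.mem_iff_lt_rowLen.mp hcell
    constructor
    · rintro ⟨h1, h2⟩
      have : ¬ (j < chOf T.1 (k + 1) i) := by omega
      rw [lt_chOf_iff] at this
      push_neg at this
      have := this hrow
      omega
    · intro hk
      have hbd : T.1 i j < n := T.2 (i, j) (by simpa using hcell)
      refine ⟨by omega, ?_⟩
      by_contra hcon
      have : j < chOf T.1 (k + 1) i := by omega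
      rw [lt_chOf_iff] at this
      omega
  · rw [entOf, if_neg hcell, T.1.zeros hcell]

theorem chainOf_tabOf {μ : YoungDiagram} {n : ℕ} (c : ChainT μ n) : chainOf (tabOf c) = c := by
  apply Subtype.ext
  funext k i
  show chOf (tabOf c).1 k i = c.1 k i
  refine nat_eq_of_lt_iff fun j => ?_
  rw [lt_chOf_iff]
  show (j < μ.rowLen i ∧ entOf μ n c.1 i j < k) ↔ j < c.1 k i
  constructor
  · rintro ⟨hrow, hent⟩
    have hcell : (i, j) ∈ μ := YoungDiagram.mem_iff_lt_rowLen.mpr hrow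
    set t := entOf μ n c.1 i j with ht
    have htn : t < n := entOf_lt c.2 hcell
    have ht2 : j < c.1 (t + 1) i := by
      by_contra hcon
      have := (lt_entOf_iff c.2 hcell (k := t)).mpr ⟨htn, by omega⟩
      omega
    exact lt_of_lt_of_le ht2 (chain_mono c.2 (by omega) i)
  · intro hj
    have hk1 : 1 ≤ k := by
      by_contra hcon
      have : c.1 k i = 0 := by
        rw [show k = 0 by omega, c.2.2.1]
      omega
    have hrow : j < μ.rowLen i := lt_of_lt_of_le hj (chain_le_rowLen c.2 k i)
    have hcell : (i, j) ∈ μ := YoungDiagram.mem_iff_lt_rowLen.mpr hrow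
    refine ⟨hrow, ?_⟩
    have : ¬ (k - 1 < entOf μ n c.1 i j) := by
      rw [lt_entOf_iff c.2 hcell]
      push_neg
      intro _
      rw [show k - 1 + 1 = k by omega]
      omega
    omega

def chainEquiv {μ : YoungDiagram} {n : ℕ} : SSYTb μ n ≃ ChainT μ n :=
  ⟨chainOf, tabOf, tabOf_chainOf, chainOf_tabOf⟩

/-! ### Young diagrams from row-length functions -/

def ofFun (f : ℕ → ℕ) (hf : Antitone f) (N : ℕ) (hN : ∀ k, N ≤ k → f k = 0) : YoungDiagram where
  cells := (Finset.range N ×ˢ Finset.range (f 0 + 1)).filter fun c => c.2 < f c.1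
  isLowerSet := by
    rintro ⟨a, b⟩ ⟨c, d⟩ ⟨hca, hdb⟩ hq
    simp only [Finset.coe_filter, Set.mem_setOf_eq, Finset.mem_product, Finset.mem_range] at hq ⊢
    have h1 : b < f a := hq.2
    have h2 : f a ≤ f c := hf hca
    exact ⟨⟨by omega, by omega⟩, by omega⟩

theorem mem_ofFun {f : ℕ → ℕ} {hf : Antitone f} {N : ℕ} {hN : ∀ k, N ≤ k → f k = 0}
    {i j : ℕ} : (i, j) ∈ ofFun f hf N hN ↔ j < f i := by
  show (i, j) ∈ Finset.filter _ _ ↔ _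
  simp only [Finset.mem_filter, Finset.mem_product, Finset.mem_range]
  constructor
  · rintro ⟨_, h⟩; exact h
  · intro h
    refine ⟨⟨?_, ?_⟩, h⟩
    · by_contra hcon
      have := hN i (by omega)
      omega
    · have := hf (Nat.zero_le i)
      omega

theorem rowLen_ofFun {f : ℕ → ℕ} {hf : Antitone f} {N : ℕ} {hN : ∀ k, N ≤ k → f k = 0}
    (i : ℕ) : (ofFun f hf N hN).rowLen i = f i := by
  refine nat_eq_of_lt_iff fun j => ?_
  rw [← YoungDiagram.mem_iff_lt_rowLen, mem_ofFun]

theorem ofFun_rowLen {μ : YoungDiagram} {hf : Antitone μ.rowLen} {N : ℕ}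
    {hN : ∀ k, N ≤ k → μ.rowLen k = 0} : ofFun μ.rowLen hf N hN = μ := by
  ext ⟨i, j⟩
  rw [YoungDiagram.mem_cells, YoungDiagram.mem_cells, mem_ofFun,
    YoungDiagram.mem_iff_lt_rowLen]

theorem rowLen_zero_of_cells_lt {μ : YoungDiagram} {r : ℕ}
    (h : ∀ c ∈ μ.cells, c.1 < r) (i : ℕ) (hi : r ≤ i) : μ.rowLen i = 0 := by
  by_contra hcon
  have hcell : (i, 0) ∈ μ := YoungDiagram.mem_iff_lt_rowLen.mpr (by omega)
  have := h (i, 0) (by simpa using hcell)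
  simp at this
  omega

/-! ### Finiteness of bounded SSYT -/

instance SSYTb.finite (μ : YoungDiagram) (n : ℕ) : Finite (SSYTb μ n) := by
  apply Finite.of_injective
    (fun T : SSYTb μ n => (fun c : μ.cells => (⟨T.1 c.1.1 c.1.2, T.2 c.1 c.2⟩ : Fin n)))
  intro T T' h
  apply Subtype.ext
  apply SemistandardYoungTableau.ext
  intro i j
  by_cases hcell : (i, j) ∈ μ
  · have := congrFun h ⟨(i, j), by simpa using hcell⟩
    simpa using congrArg Fin.val this
  · rw [T.1.zeros hcell, T'.1.zeros hcell]

/-! ### Weight of a tableau via its chain -/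

theorem prod_cells_eq {M : Type*} [CommMonoid M] (μ : YoungDiagram) (R : ℕ)
    (hR : ∀ i, R ≤ i → μ.rowLen i = 0) (f : ℕ × ℕ → M) :
    ∏ c ∈ μ.cells, f c = ∏ i ∈ Finset.range R, ∏ j ∈ Finset.range (μ.rowLen i), f (i, j) := by
  have hcells : μ.cells = (Finset.range R).biUnion
      (fun i => {i} ×ˢ Finset.range (μ.rowLen i)) := by
    ext ⟨a, b⟩
    simp only [Finset.mem_biUnion, Finset.mem_range, Finset.mem_product, Finset.mem_singleton,
      YoungDiagram.mem_cells, YoungDiagram.mem_iff_lt_rowLen]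
    constructor
    · intro h
      refine ⟨a, ?_, rfl, h⟩
      by_contra hcon
      have := hR a (by omega)
      omega
    · rintro ⟨i, _, rfl, h⟩
      exact h
  rw [hcells, Finset.prod_biUnion]
  · apply Finset.prod_congr rfl
    intro i _
    rw [Finset.prod_product]
    simp
  · intro a _ b _ hab
    apply Finset.disjoint_left.mpr
    rintro ⟨u, v⟩ hu hv
    simp only [Finset.mem_product, Finset.mem_singleton] at hu hv
    exact hab (hu.1 ▸ hv.1 ▸ rfl)

theorem row_filter_eq {μ : YoungDiagram} {n : ℕ} (T : SSYTb μ n) (i k : ℕ) :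
    (Finset.range (μ.rowLen i)).filter (fun j => T.1 i j < k)
      = Finset.range (chOf T.1 k i) := by
  ext j
  simp only [Finset.mem_filter, Finset.mem_range, lt_chOf_iff]

theorem tab_weight {μ : YoungDiagram} {n : ℕ} (T : SSYTb μ n) (R : ℕ)
    (hR : ∀ i, R ≤ i → μ.rowLen i = 0) (x : ℕ → ℝ) :
    ∏ c ∈ μ.cells, x (T.1 c.1 c.2)
      = ∏ k ∈ Finset.range n, x k ^ (∑ i ∈ Finset.range R, (chOf T.1 (k + 1) i - chOf T.1 k i)) := by
  rw [prod_cells_eq μ R hR]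
  have rowstep : ∀ i, ∏ j ∈ Finset.range (μ.rowLen i), x (T.1 i j)
      = ∏ k ∈ Finset.range n, x k ^ (chOf T.1 (k + 1) i - chOf T.1 k i) := by
    intro i
    have hmaps : ∀ j ∈ Finset.range (μ.rowLen i), T.1 i j ∈ Finset.range n := by
      intro j hj
      simp only [Finset.mem_range] at hj ⊢
      exact T.2 (i, j) (by simpa using YoungDiagram.mem_iff_lt_rowLen.mpr hj)
    rw [← Finset.prod_fiberwise_of_maps_to hmaps (fun j => x (T.1 i j))]
    apply Finset.prod_congr rfl
    intro k _
    have e1 : ∏ j ∈ (Finset.range (μ.rowLen i)).filter (fun j => T.1 i j = k), x (T.1 i j)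
        = ∏ j ∈ (Finset.range (μ.rowLen i)).filter (fun j => T.1 i j = k), x k := by
      apply Finset.prod_congr rfl
      intro j hj
      rw [(Finset.mem_filter.mp hj).2]
    rw [e1, Finset.prod_const]
    congr 1
    have e2 : (Finset.range (μ.rowLen i)).filter (fun j => T.1 i j = k)
        = Finset.range (chOf T.1 (k + 1) i) \ Finset.range (chOf T.1 k i) := by
      rw [← row_filter_eq T i (k+1), ← row_filter_eq T i k]
      ext j
      simp only [Finset.mem_filter, Finset.mem_sdiff, Finset.mem_range]
      omega
    rw [e2, Finset.card_sdiff_of_subset (show Finset.range (chOf T.1 k i) ⊆ Finset.range (chOf T.1 (k + 1) i) by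
      apply Finset.range_subset_range.mpr
      exact ((chOf_isChainT T.1 T.2).1 k).1 i)]
    simp
  calc ∏ i ∈ Finset.range R, ∏ j ∈ Finset.range (μ.rowLen i), x (T.1 i j)
      = ∏ i ∈ Finset.range R, ∏ k ∈ Finset.range n, x k ^ (chOf T.1 (k + 1) i - chOf T.1 k i) :=
        Finset.prod_congr rfl fun i _ => rowstep i
    _ = ∏ k ∈ Finset.range n, ∏ i ∈ Finset.range R, x k ^ (chOf T.1 (k + 1) i - chOf T.1 k i) :=
        Finset.prod_comm
    _ = _ := Finset.prod_congr rfl fun k _ => Finset.prod_pow_eq_pow_sum _ _ _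

/-! ### rgrid congruence -/

theorem rgrid_congr {n m : ℕ} {P P' Q Q' : ℕ → ℕ → ℕ}
    (hP : ∀ j, j ≤ m → P j = P' j) (hQ : ∀ i, i ≤ n → Q i = Q' i) :
    ∀ di dj, rgrid n m P Q di dj = rgrid n m P' Q' di dj := by
  have key : ∀ s di dj, di + dj ≤ s → rgrid n m P Q di dj = rgrid n m P' Q' di dj := by
    intro s
    induction s with
    | zero =>
      intro di dj h
      obtain ⟨rfl, rfl⟩ : di = 0 ∧ dj = 0 := by omega
      rw [rgrid_zero, rgrid_zero, hP (m - 0) (by omega)]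
    | succ s ih =>
      intro di dj hs
      match di, dj with
      | 0, dj => rw [rgrid_zero, rgrid_zero, hP (m - dj) (by omega)]
      | di + 1, 0 => rw [rgrid_succ_zero, rgrid_succ_zero, hQ (n - (di + 1)) (by omega)]
      | di + 1, dj + 1 =>
        rw [rgrid_succ, rgrid_succ, ih di (dj + 1) (by omega), ih (di + 1) dj (by omega),
          ih di dj (by omega)]
  exact fun di dj => key (di + dj) di dj le_rfl

theorem matOf_congr {n m : ℕ} {P P' Q Q' : ℕ → ℕ → ℕ}
    (hP : ∀ j, j ≤ m → P j = P' j) (hQ : ∀ i, i ≤ n → Q i = Q' i) (i j : ℕ) :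
    matOf n m P Q i j = matOf n m P' Q' i j := by
  unfold matOf
  rw [rgrid_congr hP hQ, rgrid_congr hP hQ, rgrid_congr hP hQ]

/-! ### The RSK equivalence -/

section Main

variable (n m : ℕ)

def MatD := {p : ℕ × ℕ // p ∈ Finset.range n ×ˢ Finset.range m} → ℕ

def SDom := {μ : YoungDiagram // ∀ c ∈ μ.cells, c.1 < min n m}

def TT := Σ μ : SDom n m, SSYTb μ.1 n × SSYTb μ.1 m

def Abar (A : MatD n m) (i j : ℕ) : ℕ :=
  if h : (i, j) ∈ Finset.range n ×ˢ Finset.range m then A ⟨(i, j), h⟩ else 0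

theorem Abar_lt {A : MatD n m} {i j : ℕ} (hi : i < n) (hj : j < m) :
    Abar n m A i j = A ⟨(i, j), by simp [Finset.mem_product]; omega⟩ := by
  rw [Abar, dif_pos]

def muF (A : MatD n m) : YoungDiagram :=
  ofFun (grid (Abar n m A) n m) (grid_anti _ n m) (min n m) (grid_support _ n m)

theorem muF_mem {A : MatD n m} {c : ℕ × ℕ} (hc : c ∈ (muF n m A).cells) : c.1 < min n m := by
  obtain ⟨i, j⟩ := c
  rw [YoungDiagram.mem_cells, muF, mem_ofFun] at hc
  by_contra hcon
  rw [grid_support _ n m i (by omega)] at hc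
  omega

theorem muF_rowLen (A : MatD n m) (i : ℕ) : (muF n m A).rowLen i = grid (Abar n m A) n m i :=
  rowLen_ofFun i

/-- The `x`-side (row-recording) chain. -/
def cQF (A : MatD n m) (k : ℕ) : ℕ → ℕ := grid (Abar n m A) (min k n) m

/-- The `y`-side (column/insertion) chain. -/
def cPF (A : MatD n m) (k : ℕ) : ℕ → ℕ := grid (Abar n m A) n (min k m)

theorem cQF_isChainT (A : MatD n m) : IsChainT (muF n m A) n (cQF n m A) := by
  refine ⟨fun k => ?_, ?_, fun k hk => ?_⟩
  · rcases lt_or_ge k n with h | h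
    · rw [cQF, cQF, min_eq_left (by omega), min_eq_left (by omega)]
      exact (grid_intl _ k m).1
    · rw [cQF, cQF, min_eq_right (by omega), min_eq_right (by omega)]
      exact ⟨fun i => le_rfl, fun i => grid_anti _ n m (by omega)⟩
  · rw [cQF, min_eq_left (by omega), grid_zero_left]
  · funext i
    rw [cQF, min_eq_right (by omega), muF_rowLen]

theorem cPF_isChainT (A : MatD n m) : IsChainT (muF n m A) m (cPF n m A) := by
  refine ⟨fun k => ?_, ?_, fun k hk => ?_⟩
  · rcases lt_or_ge k m with h | h
    · rw [cPF, cPF, min_eq_left (by omega), min_eq_left (by omega)]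
      exact (grid_intl _ n k).2
    · rw [cPF, cPF, min_eq_right (by omega), min_eq_right (by omega)]
      exact ⟨fun i => le_rfl, fun i => grid_anti _ n m (by omega)⟩
  · rw [cPF, min_eq_left (by omega), grid_zero_right]
  · funext i
    rw [cPF, min_eq_right (by omega), muF_rowLen]

/-- Forward map of the RSK equivalence. -/
def Ffun (A : MatD n m) : TT n m :=
  ⟨⟨muF n m A, fun _ hc => muF_mem n m hc⟩,
    chainEquiv.symm ⟨cQF n m A, cQF_isChainT n m A⟩,
    chainEquiv.symm ⟨cPF n m A, cPF_isChainT n m A⟩⟩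

/-- Backward map of the RSK equivalence. -/
def Gfun (t : TT n m) : MatD n m :=
  fun p => matOf n m (chainEquiv t.2.2).1 (chainEquiv t.2.1).1 p.1.1 p.1.2

theorem TT_ext {n m : ℕ} {t t' : TT n m} (h1 : t.1.1 = t'.1.1)
    (h2 : (chainEquiv t.2.1).1 = (chainEquiv t'.2.1).1)
    (h3 : (chainEquiv t.2.2).1 = (chainEquiv t'.2.2).1) : t = t' := by
  obtain ⟨⟨μ1, hA⟩, TQ1, TP1⟩ := t
  obtain ⟨⟨μ2, hB⟩, TQ2, TP2⟩ := t'
  simp only at h1 h2 h3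
  subst h1
  have e2 : TQ1 = TQ2 := chainEquiv.injective (Subtype.ext h2)
  have e3 : TP1 = TP2 := chainEquiv.injective (Subtype.ext h3)
  subst e2; subst e3
  rfl

theorem left_inv_FG (n m : ℕ) (A : MatD n m) : Gfun n m (Ffun n m A) = A := by
  funext p
  obtain ⟨⟨i, j⟩, hp⟩ := p
  have hij : i < n ∧ j < m := by
    simpa [Finset.mem_product] using hp
  show matOf n m (chainEquiv (chainEquiv.symm _)).1 (chainEquiv (chainEquiv.symm _)).1 i j = _
  erw [Equiv.apply_symm_apply, Equiv.apply_symm_apply]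
  show matOf n m (cPF n m A) (cQF n m A) i j = _
  rw [matOf_congr (P' := fun j => grid (Abar n m A) n j) (Q' := fun i => grid (Abar n m A) i m)
    (fun k hk => by rw [cPF, min_eq_left hk]) (fun k hk => by rw [cQF, min_eq_left hk]),
    matOf_grid _ i j hij.1 hij.2, Abar_lt n m hij.1 hij.2]

theorem right_inv_FG (n m : ℕ) (t : TT n m) : Ffun n m (Gfun n m t) = t := by
  have hP := ((chainEquiv t.2.2).2).1
  have hQ := ((chainEquiv t.2.1).2).1
  have hPm : (chainEquiv t.2.2).1 m = t.1.1.rowLen := ((chainEquiv t.2.2).2).2.2 m le_rfl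
  have hQn : (chainEquiv t.2.1).1 n = t.1.1.rowLen := ((chainEquiv t.2.1).2).2.2 n le_rfl
  have hPQ : (chainEquiv t.2.2).1 m = (chainEquiv t.2.1).1 n := by rw [hPm, hQn]
  have hP0 : (chainEquiv t.2.2).1 0 = fun _ => 0 := ((chainEquiv t.2.2).2).2.1
  have hQ0 : (chainEquiv t.2.1).1 0 = fun _ => 0 := ((chainEquiv t.2.1).2).2.1
  have hBox : ∀ i j, i < n → j < m →
      Abar n m (Gfun n m t) i j
        = matOf n m (chainEquiv t.2.2).1 (chainEquiv t.2.1).1 i j := by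
    intro i j hi hj
    rw [Abar_lt n m hi hj]
    rfl
  have key : ∀ i j, i ≤ n → j ≤ m →
      grid (Abar n m (Gfun n m t)) i j
        = rgrid n m (chainEquiv t.2.2).1 (chainEquiv t.2.1).1 (n - i) (m - j) := by
    intro i j hi hj
    rw [grid_congr hBox i j hi hj]
    exact grid_matOf hP hQ hPQ hP0 hQ0 i j hi hj
  have hgnm : grid (Abar n m (Gfun n m t)) n m = t.1.1.rowLen := by
    rw [key n m le_rfl le_rfl, Nat.sub_self, Nat.sub_self, rgrid_zero, Nat.sub_zero, hPm]
  have hμeq : muF n m (Gfun n m t) = t.1.1 := by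
    ext ⟨i, j⟩
    rw [YoungDiagram.mem_cells, YoungDiagram.mem_cells, muF, mem_ofFun,
      YoungDiagram.mem_iff_lt_rowLen, congrFun hgnm i]
  have hcQ : cQF n m (Gfun n m t) = (chainEquiv t.2.1).1 := by
    funext k
    rcases le_or_gt k n with hk | hk
    · rw [cQF, min_eq_left hk, key k m hk le_rfl, Nat.sub_self]
      obtain ⟨d, hd⟩ : ∃ d, n - k = d ∨ True := ⟨n - k, Or.inl rfl⟩
      rcases Nat.eq_zero_or_pos (n - k) with h0 | hpos
      · rw [h0, rgrid_zero, Nat.sub_zero, hPQ, show k = n by omega]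
      · obtain ⟨d', hd'⟩ : ∃ d', n - k = d' + 1 := ⟨n - k - 1, by omega⟩
        rw [hd', rgrid_succ_zero, show n - (d' + 1) = k by omega]
    · rw [cQF, min_eq_right (by omega), key n m le_rfl le_rfl, Nat.sub_self, Nat.sub_self,
        rgrid_zero, Nat.sub_zero, hPm, ((chainEquiv t.2.1).2).2.2 k (by omega)]
  have hcP : cPF n m (Gfun n m t) = (chainEquiv t.2.2).1 := by
    funext k
    rcases le_or_gt k m with hk | hk
    · rw [cPF, min_eq_left hk, key n k le_rfl hk, Nat.sub_self]
      rcases Nat.eq_zero_or_pos (m - k) with h0 | hpos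
      · have : rgrid n m (chainEquiv t.2.2).1 (chainEquiv t.2.1).1 0 0
            = (chainEquiv t.2.2).1 m := by rw [rgrid_zero, Nat.sub_zero]
        rw [h0, this, show k = m by omega]
      · rw [rgrid_zero, show m - (m - k) = k by omega]
    · rw [cPF, min_eq_right (by omega), key n m le_rfl le_rfl, Nat.sub_self, Nat.sub_self,
        rgrid_zero, Nat.sub_zero, hPm, ((chainEquiv t.2.2).2).2.2 k (by omega)]
  apply TT_ext
  · exact hμeq
  · show (chainEquiv (chainEquiv.symm _)).1 = _
    erw [Equiv.apply_symm_apply]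
    exact hcQ
  · show (chainEquiv (chainEquiv.symm _)).1 = _
    erw [Equiv.apply_symm_apply]
    exact hcP

/-- The RSK equivalence between matrices and pairs of SSYT of the same shape. -/
def rskEquiv (n m : ℕ) : MatD n m ≃ TT n m :=
  ⟨Ffun n m, Gfun n m, left_inv_FG n m, right_inv_FG n m⟩

theorem sum_sub_psize {f g : ℕ → ℕ} (h : ∀ i, g i ≤ f i) (R : ℕ) :
    ∑ i ∈ Finset.range R, (f i - g i) = psize R f - psize R g := by
  have h1 : ∑ i ∈ Finset.range R, (f i - g i) + ∑ i ∈ Finset.range R, g i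
      = ∑ i ∈ Finset.range R, f i := by
    rw [← Finset.sum_add_distrib]
    exact Finset.sum_congr rfl fun i _ => by have := h i; omega
  have h2 : psize R g ≤ psize R f := Finset.sum_le_sum fun i _ => h i
  unfold psize at *
  omega

/-- The weight of an RSK image. -/
theorem weight_F (n m : ℕ) (x y : ℕ → ℝ) (A : MatD n m) :
    (∏ c ∈ (Ffun n m A).1.1.cells, x ((Ffun n m A).2.1.1 c.1 c.2)) *
      (∏ c ∈ (Ffun n m A).1.1.cells, y ((Ffun n m A).2.2.1 c.1 c.2))
    = ∏ i ∈ Finset.range n, ∏ j ∈ Finset.range m, (x i * y j) ^ Abar n m A i j := by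
  set A' := Abar n m A with hA'
  set R := min n m + 1 with hRdef
  have hR : ∀ i, R ≤ i → (muF n m A).rowLen i = 0 :=
    fun i hi => rowLen_zero_of_cells_lt (fun c hc => muF_mem n m hc) i (by omega)
  -- the chains of the two tableaux
  have hchQ : ∀ k i, chOf (Ffun n m A).2.1.1 k i = cQF n m A k i := by
    intro k i
    have : chainEquiv (Ffun n m A).2.1 = ⟨cQF n m A, cQF_isChainT n m A⟩ :=
      Equiv.apply_symm_apply _ _
    exact congrFun (congrFun (congrArg Subtype.val this) k) i
  have hchP : ∀ k i, chOf (Ffun n m A).2.2.1 k i = cPF n m A k i := by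
    intro k i
    have : chainEquiv (Ffun n m A).2.2 = ⟨cPF n m A, cPF_isChainT n m A⟩ :=
      Equiv.apply_symm_apply _ _
    exact congrFun (congrFun (congrArg Subtype.val this) k) i
  -- x-side weight
  have ex : ∏ c ∈ (Ffun n m A).1.1.cells, x ((Ffun n m A).2.1.1 c.1 c.2)
      = ∏ k ∈ Finset.range n, x k ^ (∑ j ∈ Finset.range m, A' k j) := by
    rw [tab_weight (Ffun n m A).2.1 R hR x]
    apply Finset.prod_congr rfl
    intro k hk
    have hkn : k < n := Finset.mem_range.mp hk
    congr 1
    have e1 : ∀ i, chOf (Ffun n m A).2.1.1 (k + 1) i - chOf (Ffun n m A).2.1.1 k i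
        = cQF n m A (k + 1) i - cQF n m A k i := by
      intro i; rw [hchQ, hchQ]
    rw [Finset.sum_congr rfl fun i _ => e1 i,
      sum_sub_psize (fun i => ((cQF_isChainT n m A).1 k).1 i) R]
    have e2 : cQF n m A (k + 1) = grid A' (k + 1) m := by
      rw [cQF, min_eq_left (by omega)]
    have e3 : cQF n m A k = grid A' k m := by
      rw [cQF, min_eq_left (by omega)]
    rw [e2, e3, hRdef, grid_psize_row A' n m k (by omega) m le_rfl]
    omega
  -- y-side weight
  have ey : ∏ c ∈ (Ffun n m A).1.1.cells, y ((Ffun n m A).2.2.1 c.1 c.2)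
      = ∏ k ∈ Finset.range m, y k ^ (∑ i ∈ Finset.range n, A' i k) := by
    rw [tab_weight (Ffun n m A).2.2 R hR y]
    apply Finset.prod_congr rfl
    intro k hk
    have hkm : k < m := Finset.mem_range.mp hk
    congr 1
    have e1 : ∀ i, chOf (Ffun n m A).2.2.1 (k + 1) i - chOf (Ffun n m A).2.2.1 k i
        = cPF n m A (k + 1) i - cPF n m A k i := by
      intro i; rw [hchP, hchP]
    rw [Finset.sum_congr rfl fun i _ => e1 i,
      sum_sub_psize (fun i => ((cPF_isChainT n m A).1 k).1 i) R]
    have e2 : cPF n m A (k + 1) = grid A' n (k + 1) := by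
      rw [cPF, min_eq_left (by omega)]
    have e3 : cPF n m A k = grid A' n k := by
      rw [cPF, min_eq_left (by omega)]
    rw [e2, e3, hRdef, grid_psize_col A' n m k (by omega) n le_rfl]
    omega
  rw [ex, ey]
  have : ∏ i ∈ Finset.range n, ∏ j ∈ Finset.range m, (x i * y j) ^ A' i j
      = (∏ i ∈ Finset.range n, ∏ j ∈ Finset.range m, x i ^ A' i j) *
        (∏ i ∈ Finset.range n, ∏ j ∈ Finset.range m, y j ^ A' i j) := by
    rw [← Finset.prod_mul_distrib]
    apply Finset.prod_congr rfl
    intro i _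
    rw [← Finset.prod_mul_distrib]
    exact Finset.prod_congr rfl fun j _ => mul_pow _ _ _
  rw [this]
  congr 1
  · exact Finset.prod_congr rfl fun i _ => (Finset.prod_pow_eq_pow_sum _ _ _).symm
  · symm
    rw [Finset.prod_comm]
    exact Finset.prod_congr rfl fun j _ => (Finset.prod_pow_eq_pow_sum _ _ _)

end Main

/-! ### Finite products of infinite sums -/

theorem prod_subtype_insert {ι : Type*} [DecidableEq ι] {a : ι} {t : Finset ι} (ha : a ∉ t)
    (F : {i // i ∈ insert a t} → ℝ) :
    ∏ i : {i // i ∈ insert a t}, F i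
      = F ⟨a, Finset.mem_insert_self a t⟩
        * ∏ i : {i // i ∈ t}, F ⟨i.1, Finset.mem_insert_of_mem i.2⟩ := by
  rw [Finset.univ_eq_attach, Finset.attach_insert, Finset.prod_insert, Finset.prod_image,
    Finset.univ_eq_attach]
  · intro x hx y hy hxy
    exact Subtype.ext (Subtype.mk_eq_mk.mp hxy)
  · intro hmem
    obtain ⟨x, _, hx⟩ := Finset.mem_image.mp hmem
    apply ha
    have : a = x.1 := (congrArg Subtype.val hx).symm
    rw [this]
    exact x.2

def insertFunEquiv {ι : Type*} [DecidableEq ι] (a : ι) (t : Finset ι) (ha : a ∉ t) :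
    ({i // i ∈ insert a t} → ℕ) ≃ ℕ × ({i // i ∈ t} → ℕ) where
  toFun g := (g ⟨a, Finset.mem_insert_self a t⟩,
    fun i => g ⟨i.1, Finset.mem_insert_of_mem i.2⟩)
  invFun p := fun i =>
    if h : i.1 = a then p.1
    else p.2 ⟨i.1, by rcases Finset.mem_insert.mp i.2 with h' | h'; exact absurd h' h; exact h'⟩
  left_inv g := by
    funext i
    by_cases h : i.1 = a
    · simp only [dif_pos h]
      congr 1
      exact Subtype.ext h.symm
    · simp only [dif_neg h]
  right_inv p := by
    refine Prod.ext ?_ ?_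
    · simp
    · funext i
      have h : i.1 ≠ a := fun hh => ha (hh ▸ i.2)
      simp only [dif_neg h]

theorem prod_tsum {ι : Type*} [DecidableEq ι] (s : Finset ι) (f : ι → ℕ → ℝ)
    (hf : ∀ i ∈ s, Summable fun k => ‖f i k‖) :
    Summable (fun g : {i // i ∈ s} → ℕ => ‖∏ i : {i // i ∈ s}, f i.1 (g i)‖) ∧
      (∏ i ∈ s, ∑' k, f i k)
        = ∑' g : {i // i ∈ s} → ℕ, ∏ i : {i // i ∈ s}, f i.1 (g i) := by
  induction s using Finset.induction_on with
  | empty =>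
    haveI : IsEmpty {i // i ∈ (∅ : Finset ι)} := ⟨fun i => Finset.notMem_empty _ i.2⟩
    have hprod : ∀ g : {i // i ∈ (∅ : Finset ι)} → ℕ,
        (∏ i : {i // i ∈ (∅ : Finset ι)}, f i.1 (g i)) = 1 := by
      intro g
      apply Finset.prod_of_isEmpty
    constructor
    · apply Summable.of_finite
    · rw [Finset.prod_empty, tsum_congr hprod, tsum_const]
      simp
  | @insert a t ha ih =>
    have hfa : Summable fun k => ‖f a k‖ := hf a (Finset.mem_insert_self a t)
    have hft : ∀ i ∈ t, Summable fun k => ‖f i k‖ :=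
      fun i hi => hf i (Finset.mem_insert_of_mem hi)
    obtain ⟨ihS, ihE⟩ := ih hft
    set Pt : ({i // i ∈ t} → ℕ) → ℝ := fun g => ∏ i : {i // i ∈ t}, f i.1 (g i) with hPt
    set E := insertFunEquiv a t ha with hE
    have hfactor : ∀ g : {i // i ∈ insert a t} → ℕ,
        (∏ i : {i // i ∈ insert a t}, f i.1 (g i)) = f a ((E g).1) * Pt ((E g).2) := by
      intro g
      exact prod_subtype_insert ha (fun i => f i.1 (g i))
    have hsum2 : Summable fun z : ℕ × ({i // i ∈ t} → ℕ) => ‖f a z.1‖ * ‖Pt z.2‖ := by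
      have := summable_mul_of_summable_norm (f := fun k => ‖f a k‖) (g := fun g => ‖Pt g‖)
        (by simpa only [norm_norm] using hfa) (by simpa only [norm_norm] using ihS)
      exact this
    have hS : Summable (fun g : {i // i ∈ insert a t} → ℕ =>
        ‖∏ i : {i // i ∈ insert a t}, f i.1 (g i)‖) := by
      have : (fun g : {i // i ∈ insert a t} → ℕ =>
          ‖∏ i : {i // i ∈ insert a t}, f i.1 (g i)‖)
          = (fun z : ℕ × ({i // i ∈ t} → ℕ) => ‖f a z.1‖ * ‖Pt z.2‖) ∘ E := by
        funext g
        simp only [Function.comp_apply, hfactor g, norm_mul]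
      rw [this]
      exact (Equiv.summable_iff E).mpr hsum2
    refine ⟨hS, ?_⟩
    rw [Finset.prod_insert ha, ihE,
      tsum_mul_tsum_of_summable_norm hfa ihS]
    have := Equiv.tsum_eq E (fun z : ℕ × ({i // i ∈ t} → ℕ) => f a z.1 * Pt z.2)
    rw [← this]
    exact tsum_congr fun g => (hfactor g).symm

/-- The Schur polynomial `s_μ(x_0, …, x_{n-1})`: the sum over semistandard Young
tableaux of shape `μ` with entries in `{0, …, n-1}` of the monomials
`∏_{(i,j) ∈ μ} x_{T(i,j)}` (equivalently `∏_i x_i^{T_i}`). -/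
noncomputable def schurPoly (μ : YoungDiagram) (n : ℕ) (x : ℕ → ℝ) : ℝ :=
  ∑' T : {T : SemistandardYoungTableau μ // ∀ c ∈ μ.cells, T.entry c.1 c.2 < n},
    ∏ c ∈ μ.cells, x (T.1.entry c.1 c.2)


theorem schurPoly_eq_sum (μ : YoungDiagram) (n : ℕ) (x : ℕ → ℝ) [Fintype (SSYTb μ n)] :
    schurPoly μ n x = ∑ T : SSYTb μ n, ∏ c ∈ μ.cells, x (T.1.entry c.1 c.2) :=
  tsum_fintype _

/-- The Cauchy identity: for `|x_i y_j| < 1`,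
`∑_λ s_λ(x) s_λ(y) = ∏_{i<n} ∏_{j<m} 1/(1 - x_i y_j)`, the sum ranging over all
partitions (Young diagrams) with at most `min n m` parts (rows). -/
theorem cauchy_identity (n m : ℕ) (x y : ℕ → ℝ)
    (h : ∀ i j, i < n → j < m → |x i * y j| < 1) :
    ∑' μ : {μ : YoungDiagram // ∀ c ∈ μ.cells, c.1 < min n m},
      schurPoly μ.1 n x * schurPoly μ.1 m y
    = ∏ i ∈ range n, ∏ j ∈ range m, (1 - x i * y j)⁻¹ := by
  classical
  set s : Finset (ℕ × ℕ) := Finset.range n ×ˢ Finset.range m with hs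
  set f : ℕ × ℕ → ℕ → ℝ := fun p k => (x p.1 * y p.2) ^ k with hfdef
  have hmem : ∀ p : ℕ × ℕ, p ∈ s → p.1 < n ∧ p.2 < m := by
    intro p hp
    simpa [hs, Finset.mem_product] using hp
  have hf : ∀ p ∈ s, Summable fun k => ‖f p k‖ := by
    intro p hp
    have h1 := h p.1 p.2 (hmem p hp).1 (hmem p hp).2
    have h2 : Summable fun k : ℕ => |x p.1 * y p.2| ^ k :=
      summable_geometric_of_lt_one (abs_nonneg _) h1
    have e : (fun k => ‖f p k‖) = fun k : ℕ => |x p.1 * y p.2| ^ k := by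
      funext k
      rw [hfdef]
      rw [Real.norm_eq_abs, abs_pow]
    rw [e]
    exact h2
  obtain ⟨hSW, hEW⟩ := prod_tsum s f hf
  set W : MatD n m → ℝ := fun A => ∏ p : {p // p ∈ s}, f p.1 (A p) with hWdef
  have hW : ∀ A : MatD n m, W A
      = ∏ i ∈ Finset.range n, ∏ j ∈ Finset.range m, (x i * y j) ^ Abar n m A i j := by
    intro A
    rw [hWdef]
    calc ∏ p : {p // p ∈ s}, f p.1 (A p)
        = ∏ p ∈ s.attach, f p.1 (A p) := by rw [Finset.univ_eq_attach]
      _ = ∏ p ∈ s.attach, (x p.1.1 * y p.1.2) ^ Abar n m A p.1.1 p.1.2 := by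
          apply Finset.prod_congr rfl
          intro p _
          rw [Abar_lt n m (hmem p.1 p.2).1 (hmem p.1 p.2).2]
      _ = ∏ c ∈ s, (x c.1 * y c.2) ^ Abar n m A c.1 c.2 :=
          Finset.prod_attach s (fun c => (x c.1 * y c.2) ^ Abar n m A c.1 c.2)
      _ = _ := by rw [hs, Finset.prod_product]
  -- the weight on the tableau side
  set wt : TT n m → ℝ := fun t =>
    (∏ c ∈ t.1.1.cells, x (t.2.1.1 c.1 c.2)) * (∏ c ∈ t.1.1.cells, y (t.2.2.1 c.1 c.2))
    with hwtdef
  have hwt : ∀ t : TT n m, wt t = W ((rskEquiv n m).symm t) := by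
    intro t
    have h1 : (rskEquiv n m).symm t = Gfun n m t := rfl
    rw [h1, hW (Gfun n m t), ← weight_F n m x y (Gfun n m t), right_inv_FG n m t, hwtdef]
  have hSummW : Summable W := Summable.of_norm hSW
  have hSumwt : Summable wt := by
    have : wt = W ∘ (rskEquiv n m).symm := funext hwt
    rw [this]
    exact ((rskEquiv n m).symm.summable_iff).mpr hSummW
  -- right-hand side as a tsum over matrices
  have hRHS : ∏ i ∈ Finset.range n, ∏ j ∈ Finset.range m, (1 - x i * y j)⁻¹
      = ∑' A : MatD n m, W A := by
    calc ∏ i ∈ Finset.range n, ∏ j ∈ Finset.range m, (1 - x i * y j)⁻¹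
        = ∏ p ∈ s, (1 - x p.1 * y p.2)⁻¹ := by rw [hs, Finset.prod_product]
      _ = ∏ p ∈ s, ∑' k, f p k := by
          apply Finset.prod_congr rfl
          intro p hp
          rw [hfdef]
          exact (tsum_geometric_of_abs_lt_one (h p.1 p.2 (hmem p hp).1 (hmem p hp).2)).symm
      _ = ∑' A : MatD n m, W A := hEW
  -- transfer along the RSK equivalence
  have hTrans : ∑' A : MatD n m, W A = ∑' t : TT n m, wt t := by
    rw [← Equiv.tsum_eq (rskEquiv n m).symm W]
    exact tsum_congr fun t => (hwt t).symm
  -- split the sigma type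
  have hSigma : ∑' t : TT n m, wt t
      = ∑' μ : SDom n m, ∑' pq : SSYTb μ.1 n × SSYTb μ.1 m, wt ⟨μ, pq⟩ :=
    hSumwt.tsum_sigma
  -- inner sums are products of Schur polynomials
  have hInner : ∀ μ : SDom n m,
      ∑' pq : SSYTb μ.1 n × SSYTb μ.1 m, wt ⟨μ, pq⟩
        = schurPoly μ.1 n x * schurPoly μ.1 m y := by
    intro μ
    letI : Fintype (SSYTb μ.1 n) := Fintype.ofFinite _
    letI : Fintype (SSYTb μ.1 m) := Fintype.ofFinite _
    rw [tsum_fintype, schurPoly_eq_sum, schurPoly_eq_sum, Finset.sum_mul_sum,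
      Fintype.sum_prod_type]
    rfl
  rw [hRHS, hTrans, hSigma]
  symm
  exact tsum_congr fun μ => (hInner μ)
end

section
/- Let A = (a_{ij}) be an n×n matrix of nonnegative integers that is lower triangular (a_{ij} = 0 for j > i), and let B be the symmetric matrix defined by b_{ij} = b_{ji} = a_{max(i,j),min(i,j)}. Then the maximum over all down-right lattice paths π from (1,1) to (n,n) of ∑_{(r,t)∈π} a_{r,t} equals the maximum over all such paths of ∑_{(r,t)∈π} b_{r,t}. -/
/-- A single step of a down-right path: increase one coordinate by 1. -/
def DRStep (p q : ℕ × ℕ) : Prop := q = (p.1 + 1, p.2) ∨ q = (p.1, p.2 + 1)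

/-- A down-right lattice path from `(1,1)` to `(n,m)` (1-based coordinates). -/
def IsDRPath (n m : ℕ) (π : List (ℕ × ℕ)) : Prop :=
  π.head? = some (1, 1) ∧ π.getLast? = some (n, m) ∧ π.Chain' DRStep

/-- The weight of a path: sum of matrix entries along it. -/
def pathWeight (w : ℕ → ℕ → ℕ) (π : List (ℕ × ℕ)) : ℕ :=
  (π.map fun p => w p.1 p.2).sum

lemma DRStep.reflect {p q : ℕ × ℕ} (h : DRStep p q) :
    DRStep (max p.1 p.2, min p.1 p.2) (max q.1 q.2, min q.1 q.2) := by
  rcases h with h | h <;> subst h <;> simp [DRStep, Prod.ext_iff] <;> omega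

lemma drpath_mono (π : List (ℕ × ℕ)) (hc : π.Chain' DRStep) :
    ∀ q, π.getLast? = some q → ∀ p ∈ π, p.1 ≤ q.1 ∧ p.2 ≤ q.2 := by
  induction π with
  | nil => simp
  | cons p rest ih =>
    intro q hq r hr
    cases rest with
    | nil =>
      simp at hq hr
      subst hq; subst hr; exact ⟨le_rfl, le_rfl⟩
    | cons p' rest' =>
      rw [List.getLast?_cons_cons] at hq
      simp only [List.Chain', List.isChain_cons_cons] at hc
      have hp' := ih hc.2 q hq p' (by simp)
      rcases List.mem_cons.mp hr with hr | hr
      · subst hr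
        rcases hc.1 with h | h <;> subst h <;> simp at hp' ⊢ <;> omega
      · exact ih hc.2 q hq r hr

lemma drpath_length (π : List (ℕ × ℕ)) (hc : π.Chain' DRStep) :
    ∀ h0 q, π.head? = some h0 → π.getLast? = some q →
      π.length + h0.1 + h0.2 = q.1 + q.2 + 1 := by
  induction π with
  | nil => simp
  | cons p rest ih =>
    intro h0 q hh hq
    cases rest with
    | nil =>
      simp at hh hq
      subst hh; subst hq; simp; omega
    | cons p' rest' =>
      rw [List.getLast?_cons_cons] at hq
      simp only [List.Chain', List.isChain_cons_cons] at hc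
      simp only [List.head?_cons, Option.some.injEq] at hh
      subst hh
      have := ih hc.2 p' q rfl hq
      have hstep : p'.1 + p'.2 = p.1 + p.2 + 1 := by
        rcases hc.1 with hs | hs <;> subst hs <;> simp <;> omega
      simp only [List.length_cons] at this ⊢
      omega

lemma pathWeight_bddAbove (n : ℕ) (w : ℕ → ℕ → ℕ) :
    BddAbove {s | ∃ π, IsDRPath n n π ∧ s = pathWeight w π} := by
  classical
  set M : ℕ := (Finset.Iic n).sup fun i => (Finset.Iic n).sup fun j => w i j with hM
  refine ⟨2 * n * M, ?_⟩
  rintro s ⟨π, ⟨hh, hq, hc⟩, rfl⟩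
  have hlen : π.length ≤ 2 * n := by
    have := drpath_length π hc (1, 1) (n, n) hh hq
    simp at this; omega
  have hbound : ∀ p ∈ π, w p.1 p.2 ≤ M := by
    intro p hp
    have hmem := drpath_mono π hc (n, n) hq p hp
    calc w p.1 p.2 ≤ (Finset.Iic n).sup fun j => w p.1 j :=
          Finset.le_sup (Finset.mem_Iic.mpr hmem.2)
      _ ≤ M := Finset.le_sup (f := fun i => (Finset.Iic n).sup fun j => w i j)
          (Finset.mem_Iic.mpr hmem.1)
  calc pathWeight w π ≤ (π.map fun p => w p.1 p.2).length • M := by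
        refine List.sum_le_card_nsmul _ _ ?_
        intro x hx
        obtain ⟨p, hp, rfl⟩ := List.mem_map.mp hx
        exact hbound p hp
    _ ≤ 2 * n * M := by
        simp only [List.length_map, smul_eq_mul]
        exact Nat.mul_le_mul_right M hlen

lemma reflect_isDRPath (n : ℕ) (π : List (ℕ × ℕ)) (h : IsDRPath n n π) :
    IsDRPath n n (π.map fun p => (max p.1 p.2, min p.1 p.2)) := by
  obtain ⟨hh, hq, hc⟩ := h
  refine ⟨?_, ?_, ?_⟩
  · rw [List.head?_map, hh]; simp
  · rw [List.getLast?_map, hq]; simp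
  · exact List.isChain_map_of_isChain _ (fun a b hab => DRStep.reflect hab) hc

/-- For a lower triangular nonnegative-integer matrix `a` and its symmetrization
`b i j = a (max i j) (min i j)`, the LPP times from `(1,1)` to `(n,n)` coincide. -/
theorem lpp_lowerTriangular_eq_lpp_symmetrization (n : ℕ) (a : ℕ → ℕ → ℕ)
    (hlt : ∀ i j, i < j → a i j = 0) :
    sSup {s | ∃ π, IsDRPath n n π ∧ s = pathWeight a π} =
    sSup {s | ∃ π, IsDRPath n n π ∧
      s = pathWeight (fun i j => a (max i j) (min i j)) π} := by
  apply le_antisymm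
  · apply csSup_le'
    rintro s ⟨π, hπ, rfl⟩
    have hle : pathWeight a π ≤ pathWeight (fun i j => a (max i j) (min i j)) π := by
      unfold pathWeight
      refine List.sum_le_sum ?_
      intro p hp
      rcases le_or_gt p.2 p.1 with h | h
      · simp [max_eq_left h, min_eq_right h]
      · simp [hlt _ _ h]
    exact hle.trans (le_csSup (pathWeight_bddAbove n _) ⟨π, hπ, rfl⟩)
  · apply csSup_le'
    rintro s ⟨π, hπ, rfl⟩
    have hw : pathWeight (fun i j => a (max i j) (min i j)) π =
        pathWeight a (π.map fun p => (max p.1 p.2, min p.1 p.2)) := by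
      unfold pathWeight
      rw [List.map_map]
      rfl
    rw [hw]
    exact le_csSup (pathWeight_bddAbove n a) ⟨_, reflect_isDRPath n π hπ, rfl⟩
end

section
/- Let (i_1,j_1), (i_2,j_2), …, (i_N,j_N) be the biword (lexicographically ordered list of positions with multiplicity) associated to a matrix A of nonnegative integers, i.e., each position (i,j) appears a_{ij} times, ordered first by i then by j. Then the length of a longest nondecreasing subsequence of the word (j_1,…,j_N) equals the last passage percolation time max_π ∑_{(r,t)∈π} a_{r,t} over down-right paths π from (1,1) to (n,m). -/
/-- The biword of an `n×m` nonnegative integer matrix: each position `(i,j)`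
(1-based) is listed `a i j` times, in lexicographic order (first by `i`,
then by `j`). -/
def biword (n m : ℕ) (a : ℕ → ℕ → ℕ) : List (ℕ × ℕ) :=
  (List.range n).flatMap fun i => (List.range m).flatMap fun j =>
    List.replicate (a (i + 1) (j + 1)) (i + 1, j + 1)

namespace LPPAux

open List

/-! ### Generic list lemmas -/

theorem pairwise_flatMap {α β : Type*} {R : β → β → Prop} {f : α → List β} :
    ∀ {l : List α}, (∀ x ∈ l, (f x).Pairwise R) →
      l.Pairwise (fun x y => ∀ u ∈ f x, ∀ v ∈ f y, R u v) →
      (l.flatMap f).Pairwise R := by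
  intro l
  induction l with
  | nil => intro _ _; simp
  | cons x l ih =>
    intro h1 h2
    rw [pairwise_cons] at h2
    rw [flatMap_cons, pairwise_append]
    refine ⟨h1 x (mem_cons_self), ih (fun b hb => h1 b (mem_cons_of_mem _ hb)) h2.2, ?_⟩
    intro u hu v hv
    obtain ⟨y, hy, hvy⟩ := mem_flatMap.1 hv
    exact h2.1 y hy u hu v hvy

theorem sublist_flatMap {α β : Type*} (f : α → List β) {l₁ l₂ : List α} (h : l₁ <+ l₂) :
    l₁.flatMap f <+ l₂.flatMap f := by
  induction h with
  | slnil => exact Sublist.refl _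
  | cons a h ih => rw [flatMap_cons]; exact ih.trans (sublist_append_right _ _)
  | cons_cons a h ih => rw [flatMap_cons, flatMap_cons]; exact ih.append_left _

theorem sublist_of_subset_of_pairwise {α : Type*} {R : α → α → Prop}
    (hasymm : ∀ a b, R a b → R b a → False) {l₁ l₂ : List α}
    (h1 : l₁.Pairwise R) (h2 : l₂.Pairwise R) (hsub : l₁ ⊆ l₂) : l₁ <+ l₂ := by
  induction l₂ generalizing l₁ with
  | nil => rw [subset_nil.1 hsub]
  | cons b t ih =>
    cases l₁ with
    | nil => exact nil_sublist _
    | cons x s =>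
      rw [pairwise_cons] at h2
      by_cases hxb : x = b
      · subst hxb
        rw [pairwise_cons] at h1
        refine Sublist.cons₂ _ (ih h1.2 h2.2 ?_)
        intro y hy
        rcases mem_cons.1 (hsub (mem_cons_of_mem _ hy)) with rfl | h
        · exact absurd (h1.1 y hy) (fun hr => hasymm _ _ hr hr)
        · exact h
      · have hxt : x ∈ t := (mem_cons.1 (hsub (mem_cons_self))).resolve_left hxb
        refine Sublist.cons _ (ih h1 h2.2 ?_)
        intro y hy
        rcases mem_cons.1 (hsub hy) with rfl | h
        · -- y = b is in x :: s
          rcases mem_cons.1 hy with rfl | hys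
          · exact absurd rfl hxb
          · exact absurd (h2.1 x hxt) (fun hr => hasymm _ _ ((pairwise_cons.1 h1).1 _ hys) hr)
        · exact h

theorem count_flatMap_replicate {k : ℕ × ℕ → ℕ} :
    ∀ {d : List (ℕ × ℕ)}, d.Nodup → ∀ {x}, x ∈ d →
      (d.flatMap fun p => List.replicate (k p) p).count x = k x := by
  intro d
  induction d with
  | nil => simp
  | cons p d' ih =>
    intro hnd x hx
    rw [flatMap_cons, count_append]
    rcases mem_cons.1 hx with rfl | hx'
    · have h0 : (d'.flatMap fun p => List.replicate (k p) p).count x = 0 := by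
        rw [count_eq_zero]
        intro hmem
        obtain ⟨q, hq, hq2⟩ := mem_flatMap.1 hmem
        obtain rfl := eq_of_mem_replicate hq2
        exact (nodup_cons.1 hnd).1 hq
      rw [h0]
      simp [count_replicate]
    · have hne : p ≠ x := by
        intro h
        exact (nodup_cons.1 hnd).1 (h ▸ hx')
      rw [ih (nodup_cons.1 hnd).2 hx']
      simp [count_replicate, hne]

/-! ### Cells and lexicographic order -/

theorem count_eq_count {α : Type*} [DecidableEq α] (inst : BEq α)
    [@LawfulBEq α inst] (x : α) (l : List α) :
    @List.count α inst x l = @List.count α instBEqOfDecidableEq x l := by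
  induction l with
  | nil => rfl
  | cons b l ih => by_cases hbx : b = x <;> simp [List.count_cons, hbx, ih]

def lexLT (p q : ℕ × ℕ) : Prop := p.1 < q.1 ∨ (p.1 = q.1 ∧ p.2 < q.2)

theorem lexLT_asymm : ∀ a b : ℕ × ℕ, lexLT a b → lexLT b a → False := by
  rintro ⟨a1, a2⟩ ⟨b1, b2⟩ (h | ⟨h, h'⟩) (g | ⟨g, g'⟩) <;> simp_all <;> omega

theorem lexLT_ne {a b : ℕ × ℕ} (h : lexLT a b) : a ≠ b := by
  rintro rfl
  exact lexLT_asymm a a h h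

instance : IsTrans (ℕ × ℕ) lexLT where
  trans := by
    rintro ⟨a1, a2⟩ ⟨b1, b2⟩ ⟨c1, c2⟩ (h | ⟨h, h'⟩) (g | ⟨g, g'⟩) <;>
      simp_all [lexLT] <;> omega

def allCells (n m : ℕ) : List (ℕ × ℕ) :=
  (List.range n).flatMap fun i => (List.range m).map fun j => (i + 1, j + 1)

theorem mem_allCells {n m : ℕ} {x : ℕ × ℕ} :
    x ∈ allCells n m ↔ 1 ≤ x.1 ∧ x.1 ≤ n ∧ 1 ≤ x.2 ∧ x.2 ≤ m := by
  obtain ⟨u, v⟩ := x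
  simp only [allCells, mem_flatMap, mem_map, mem_range]
  constructor
  · rintro ⟨i, hi, j, hj, h⟩
    rw [Prod.mk.injEq] at h
    omega
  · rintro ⟨h1, h2, h3, h4⟩
    refine ⟨u - 1, by omega, v - 1, by omega, ?_⟩
    simp only [Prod.mk.injEq]
    omega

theorem allCells_pairwise (n m : ℕ) : (allCells n m).Pairwise lexLT := by
  apply pairwise_flatMap
  · intro i _
    rw [pairwise_map]
    exact (pairwise_lt_range (n := m)).imp fun h => Or.inr ⟨rfl, by omega⟩
  · refine (pairwise_lt_range (n := n)).imp ?_
    intro i i' hii' x hx y hy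
    simp only [mem_map, mem_range] at hx hy
    obtain ⟨j, _, rfl⟩ := hx
    obtain ⟨j', _, rfl⟩ := hy
    exact Or.inl (by omega)

theorem allCells_nodup (n m : ℕ) : (allCells n m).Nodup :=
  (allCells_pairwise n m).imp fun h => lexLT_ne h

/-! ### biword facts -/

theorem biword_eq (n m : ℕ) (a : ℕ → ℕ → ℕ) :
    biword n m a = (allCells n m).flatMap fun p => List.replicate (a p.1 p.2) p := by
  simp only [biword, allCells, flatMap_assoc, flatMap_map]

theorem mem_biword_mem_allCells {n m : ℕ} {a : ℕ → ℕ → ℕ} {x : ℕ × ℕ}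
    (h : x ∈ biword n m a) : x ∈ allCells n m := by
  rw [biword_eq] at h
  obtain ⟨p, hp, hx⟩ := mem_flatMap.1 h
  obtain rfl := eq_of_mem_replicate hx
  exact hp

theorem count_biword {n m : ℕ} {a : ℕ → ℕ → ℕ} {x : ℕ × ℕ} (hx : x ∈ allCells n m) :
    (biword n m a).count x = a x.1 x.2 := by
  rw [biword_eq]
  exact count_flatMap_replicate (allCells_nodup n m) hx

theorem biword_pairwise_fst {n m : ℕ} {a : ℕ → ℕ → ℕ} :
    (biword n m a).Pairwise fun p q => p.1 ≤ q.1 := by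
  rw [biword_eq]
  apply pairwise_flatMap
  · intro p _
    exact pairwise_replicate.2 (Or.inr le_rfl)
  · refine (allCells_pairwise n m).imp ?_
    intro p q h x hx y hy
    obtain rfl := eq_of_mem_replicate hx
    obtain rfl := eq_of_mem_replicate hy
    rcases h with h | ⟨h, _⟩
    · exact le_of_lt h
    · exact le_of_eq h

/-! ### Path facts -/

theorem drstep_le {p q : ℕ × ℕ} (h : DRStep p q) : p ≤ q := by
  rcases h with rfl | rfl <;> exact Prod.le_def.2 (by simp)

theorem drstep_lexLT {p q : ℕ × ℕ} (h : DRStep p q) : lexLT p q := by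
  rcases h with rfl | rfl
  · exact Or.inl (by simp)
  · exact Or.inr ⟨rfl, by simp⟩

theorem path_pairwise_le {n m : ℕ} {π : List (ℕ × ℕ)} (hπ : IsDRPath n m π) :
    π.Pairwise (· ≤ ·) :=
  isChain_iff_pairwise.1 (IsChain.imp (by intro _ _ h; exact drstep_le h) hπ.2.2)

theorem path_pairwise_lexLT {n m : ℕ} {π : List (ℕ × ℕ)} (hπ : IsDRPath n m π) :
    π.Pairwise lexLT :=
  isChain_iff_pairwise.1 (IsChain.imp (by intro _ _ h; exact drstep_lexLT h) hπ.2.2)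

theorem path_mem_box {n m : ℕ} {π : List (ℕ × ℕ)} (hπ : IsDRPath n m π) :
    ∀ x ∈ π, (1, 1) ≤ x ∧ x ≤ (n, m) := by
  have hple := path_pairwise_le hπ
  obtain ⟨h1, h2, _⟩ := hπ
  intro x hx
  constructor
  · cases π with
    | nil => simp at h1
    | cons p t =>
      obtain rfl : p = (1, 1) := by simpa using h1
      rcases mem_cons.1 hx with rfl | hx'
      · exact le_rfl
      · exact (pairwise_cons.1 hple).1 x hx'
  · obtain ⟨ys, hys⟩ := getLast?_eq_some_iff.1 h2
    subst hys
    rcases mem_append.1 hx with hx' | hx'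
    · exact (pairwise_append.1 hple).2.2 x hx' (n, m) (mem_singleton.2 rfl)
    · obtain rfl := mem_singleton.1 hx'
      exact le_rfl

theorem path_sublist_allCells {n m : ℕ} {π : List (ℕ × ℕ)} (hπ : IsDRPath n m π) :
    π <+ allCells n m := by
  refine sublist_of_subset_of_pairwise lexLT_asymm (path_pairwise_lexLT hπ)
    (allCells_pairwise n m) ?_
  intro x hx
  obtain ⟨hl, hr⟩ := path_mem_box hπ x hx
  rw [Prod.le_def] at hl hr
  exact mem_allCells.2 ⟨hl.1, hr.1, hl.2, hr.2⟩

/-! ### Path construction through a chain of cells -/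

def seg (p q : ℕ × ℕ) : List (ℕ × ℕ) :=
  ((List.range (q.1 - p.1)).map fun t => (p.1 + t + 1, p.2)) ++
    ((List.range (q.2 - p.2)).map fun t => (q.1, p.2 + t + 1))

theorem seg_self (p : ℕ × ℕ) : seg p p = [] := by simp [seg]

theorem getLast?_range (k : ℕ) : (List.range (k + 1)).getLast? = some k := by
  rw [range_succ]; exact getLast?_concat

theorem seg_cons_eq {x y z w : ℕ} :
    (x, y) :: seg (x, y) (z, w) =
      ((List.range (z - x + 1)).map fun t => (x + t, y)) ++
        ((List.range (w - y)).map fun t => (z, y + t + 1)) := by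
  rw [range_succ_eq_map, map_cons, map_map]
  simp only [seg, Nat.add_zero, cons_append]
  rfl

theorem seg_chain {p q : ℕ × ℕ} (h : p ≤ q) : List.Chain' DRStep (p :: seg p q) := by
  obtain ⟨x, y⟩ := p
  obtain ⟨z, w⟩ := q
  rw [Prod.mk_le_mk] at h
  rw [seg_cons_eq]
  apply List.IsChain.append
  · rw [isChain_map, isChain_range_succ]
    intro i _
    exact Or.inl rfl
  · rw [isChain_map]
    rcases hw : w - y with _ | d
    · simp
    · rw [isChain_range_succ]
      intro i _
      exact Or.inr rfl
  · intro u hu v hv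
    rw [getLast?_map, getLast?_range] at hu
    rw [head?_map] at hv
    simp only [Option.map_some, Option.mem_def, Option.some.injEq] at hu
    rcases hw : w - y with _ | d
    · rw [hw] at hv; simp at hv
    · rw [hw] at hv
      rw [range_succ_eq_map] at hv
      simp only [head?_cons, Option.map_some, Option.mem_def, Option.some.injEq] at hv
      subst hu; subst hv
      have hxz : x + (z - x) = z := by omega
      rw [hxz]
      exact Or.inr rfl

theorem seg_getLast {p q : ℕ × ℕ} (h : p ≤ q) : (p :: seg p q).getLast? = some q := by
  obtain ⟨x, y⟩ := p
  obtain ⟨z, w⟩ := q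
  rw [Prod.mk_le_mk] at h
  rw [seg_cons_eq, getLast?_append]
  rcases hw : w - y with _ | d
  · simp only [range_zero, map_nil, getLast?_nil, Option.none_or]
    rw [getLast?_map, getLast?_range]
    have h1 : x + (z - x) = z := by omega
    have h2 : y = w := by omega
    rw [Option.map_some, h1, h2]
  · rw [getLast?_map, getLast?_range]
    have h2 : y + d + 1 = w := by omega
    rw [Option.map_some, h2]
    rfl

theorem seg_ne_nil {p q : ℕ × ℕ} (h : p ≤ q) (hne : p ≠ q) : seg p q ≠ [] := by
  obtain ⟨x, y⟩ := p
  obtain ⟨z, w⟩ := q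
  rw [Prod.mk_le_mk] at h
  intro hnil
  simp only [seg, append_eq_nil_iff, map_eq_nil_iff, range_eq_nil] at hnil
  exact hne (by simp only [Prod.mk.injEq]; omega)

theorem seg_concat {p q : ℕ × ℕ} (h : p ≤ q) (hne : p ≠ q) :
    ∃ s, seg p q = s ++ [q] := by
  obtain ⟨ys, hys⟩ := getLast?_eq_some_iff.1 (seg_getLast h)
  cases ys with
  | nil =>
    simp only [nil_append] at hys
    obtain ⟨h1, h2⟩ := cons_eq_cons.1 hys
    exact absurd h1 hne
  | cons a ys' =>
    rw [cons_append] at hys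
    obtain ⟨h1, h2⟩ := cons_eq_cons.1 hys
    exact ⟨ys', h2⟩

def pathThrough : ℕ × ℕ → List (ℕ × ℕ) → ℕ × ℕ → List (ℕ × ℕ)
  | p, [], e => seg p e
  | p, q :: c, e => seg p q ++ pathThrough q c e

theorem pathThrough_spec : ∀ (c : List (ℕ × ℕ)) (p e : ℕ × ℕ),
    List.Chain' (· ≤ ·) (p :: (c ++ [e])) →
    List.Chain' DRStep (p :: pathThrough p c e) ∧
      (p :: pathThrough p c e).getLast? = some e := by
  intro c
  induction c with
  | nil =>
    intro p e h
    rw [nil_append] at h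
    have hpe : p ≤ e := (isChain_cons_cons.1 h).1
    exact ⟨seg_chain hpe, seg_getLast hpe⟩
  | cons q c' ih =>
    intro p e h
    rw [cons_append] at h
    have hpq : p ≤ q := (isChain_cons_cons.1 h).1
    obtain ⟨ihc, ihl⟩ := ih q e (isChain_cons_cons.1 h).2
    have heq : p :: pathThrough p (q :: c') e = (p :: seg p q) ++ pathThrough q c' e := by
      simp [pathThrough]
    constructor
    · rw [heq]
      refine IsChain.append (seg_chain hpq) (IsChain.tail ihc) ?_
      intro u hu v hv
      rw [seg_getLast hpq] at hu
      obtain rfl : q = u := by simpa using hu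
      exact (isChain_cons.1 ihc).1 v hv
    · rw [heq, getLast?_append]
      cases hPT : pathThrough q c' e with
      | nil =>
        rw [hPT] at ihl
        have : q = e := by simpa using ihl
        subst this
        simp [seg_getLast hpq]
      | cons r t =>
        rw [hPT] at ihl
        rw [getLast?_cons_cons] at ihl
        rw [ihl]
        rfl

theorem sublist_pathThrough : ∀ (c : List (ℕ × ℕ)) (p e : ℕ × ℕ),
    List.Chain' (fun u v => u ≤ v ∧ u ≠ v) (p :: c) → c <+ pathThrough p c e := by
  intro c
  induction c with
  | nil => intro p e _; exact nil_sublist _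
  | cons q c' ih =>
    intro p e h
    have h1 := (isChain_cons_cons.1 h).1
    have h2 := (isChain_cons_cons.1 h).2
    obtain ⟨s, hs⟩ := seg_concat h1.1 h1.2
    show q :: c' <+ seg p q ++ pathThrough q c' e
    rw [hs, append_assoc]
    refine Sublist.trans ?_ (sublist_append_right s _)
    exact Sublist.cons₂ q (ih q e h2)

theorem exists_path {n m : ℕ} {d : List (ℕ × ℕ)} (hn : 1 ≤ n) (hm : 1 ≤ m)
    (hd : d.Pairwise fun u v => u ≤ v ∧ u ≠ v)
    (hbox : ∀ x ∈ d, (1, 1) ≤ x ∧ x ≤ (n, m)) :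
    ∃ π, IsDRPath n m π ∧ d <+ π := by
  have hch : List.Chain' (· ≤ ·) ((1, 1) :: (d ++ [(n, m)])) := by
    apply List.Pairwise.isChain
    rw [pairwise_cons]
    constructor
    · intro x hx
      rcases mem_append.1 hx with hx | hx
      · exact (hbox x hx).1
      · obtain rfl := mem_singleton.1 hx
        exact Prod.mk_le_mk.2 ⟨hn, hm⟩
    · rw [pairwise_append]
      refine ⟨hd.imp fun h => h.1, pairwise_singleton _ _, ?_⟩
      intro x hx y hy
      obtain rfl := mem_singleton.1 hy
      exact (hbox x hx).2
  obtain ⟨hc, hl⟩ := pathThrough_spec d (1, 1) (n, m) hch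
  refine ⟨(1, 1) :: pathThrough (1, 1) d (n, m), ⟨rfl, hl, hc⟩, ?_⟩
  cases d with
  | nil => exact nil_sublist _
  | cons q d' =>
    by_cases hq : (1, 1) = q
    · subst hq
      have heq : pathThrough ((1 : ℕ), (1 : ℕ)) (((1 : ℕ), (1 : ℕ)) :: d') (n, m) =
          pathThrough (1, 1) d' (n, m) := by
        simp [pathThrough, seg_self]
      rw [heq]
      exact Sublist.cons₂ _ (sublist_pathThrough d' (1, 1) (n, m) hd.isChain)
    · have hch2 : List.Chain' (fun u v => u ≤ v ∧ u ≠ v) ((1, 1) :: q :: d') := by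
        apply List.Pairwise.isChain
        rw [pairwise_cons]
        refine ⟨?_, hd⟩
        intro x hx
        refine ⟨(hbox x hx).1, ?_⟩
        rcases mem_cons.1 hx with rfl | hx'
        · exact hq
        · intro hxe
          have h3 := (pairwise_cons.1 hd).1 x hx'
          have h4 : q ≤ (1, 1) := hxe ▸ h3.1
          have h5 : ((1 : ℕ), (1 : ℕ)) ≤ q := (hbox q (mem_cons_self)).1
          exact hq (le_antisymm h5 h4)
      exact Sublist.cons _ (sublist_pathThrough (q :: d') (1, 1) (n, m) hch2)

/-! ### The two directions -/

theorem exists_word {n m : ℕ} {a : ℕ → ℕ → ℕ} {π : List (ℕ × ℕ)} (hπ : IsDRPath n m π) :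
    ∃ l : List ℕ, l <+ (biword n m a).map Prod.snd ∧ l.Pairwise (· ≤ ·) ∧
      l.length = (π.map fun p => a p.1 p.2).sum := by
  refine ⟨(π.flatMap fun p => List.replicate (a p.1 p.2) p).map Prod.snd, ?_, ?_, ?_⟩
  · rw [biword_eq]
    exact Sublist.map _ (sublist_flatMap _ (path_sublist_allCells hπ))
  · refine pairwise_map.2 ?_
    apply pairwise_flatMap
    · intro p _
      exact pairwise_replicate.2 (Or.inr le_rfl)
    · refine (path_pairwise_le hπ).imp ?_
      intro p q h x hx y hy
      obtain rfl := eq_of_mem_replicate hx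
      obtain rfl := eq_of_mem_replicate hy
      exact (Prod.le_def.1 h).2
  · rw [length_map, length_flatMap]
    congr 1
    exact map_congr_left fun p _ => by simp

theorem le_direction {n m : ℕ} {a : ℕ → ℕ → ℕ} {l : List ℕ}
    (hsub : l <+ (biword n m a).map Prod.snd) (hsort : l.Pairwise (· ≤ ·)) :
    l = [] ∨ ∃ π, IsDRPath n m π ∧ l.length ≤ (π.map fun p => a p.1 p.2).sum := by
  obtain ⟨c, hc, rfl⟩ := sublist_map_iff.1 hsub
  rcases c with _ | ⟨p, c'⟩
  · left; rfl
  · right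
    have hpmem : p ∈ biword n m a := hc.subset (mem_cons_self)
    have hpac := mem_allCells.1 (mem_biword_mem_allCells hpmem)
    have hn : 1 ≤ n := le_trans hpac.1 hpac.2.1
    have hm : 1 ≤ m := le_trans hpac.2.2.1 hpac.2.2.2
    have hcle : (p :: c').Pairwise (· ≤ ·) := by
      have h1 : (p :: c').Pairwise fun u v => u.1 ≤ v.1 :=
        List.Pairwise.sublist hc biword_pairwise_fst
      have h2 : (p :: c').Pairwise fun u v => u.2 ≤ v.2 := pairwise_map.1 hsort
      exact (h1.and h2).imp fun h => Prod.le_def.2 h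
    have hdnd : (p :: c').dedup.Nodup := nodup_dedup _
    have hdsub : (p :: c').dedup <+ (p :: c') := dedup_sublist _
    have hdpair : (p :: c').dedup.Pairwise fun u v => u ≤ v ∧ u ≠ v :=
      (List.Pairwise.sublist hdsub hcle).and hdnd
    have hdbox : ∀ x ∈ (p :: c').dedup, (1, 1) ≤ x ∧ x ≤ (n, m) := by
      intro x hx
      have hxac := mem_allCells.1 (mem_biword_mem_allCells (hc.subset (hdsub.subset hx)))
      exact ⟨Prod.le_def.2 ⟨hxac.1, hxac.2.2.1⟩, Prod.le_def.2 ⟨hxac.2.1, hxac.2.2.2⟩⟩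
    obtain ⟨π, hπ, hdπ⟩ := exists_path hn hm hdpair hdbox
    refine ⟨π, hπ, ?_⟩
    rw [length_map]
    have h1 := (sum_toFinset_count_eq_length (p :: c')).symm
    have h2 : ∀ x ∈ (p :: c').toFinset,
        @List.count _ instBEqOfDecidableEq x (p :: c') ≤ a x.1 x.2 := by
      intro x hx
      rw [← count_eq_count instBEqProd x (p :: c')]
      have hcl := hc.count_le x
      rwa [count_biword (mem_biword_mem_allCells (hc.subset (mem_toFinset.1 hx)))] at hcl
    have h3 : ∑ x ∈ (p :: c').toFinset, @List.count _ instBEqOfDecidableEq x (p :: c') ≤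
        ∑ x ∈ (p :: c').toFinset, a x.1 x.2 := Finset.sum_le_sum h2
    have h4 : (p :: c').toFinset = (p :: c').dedup.toFinset := by
      ext x
      simp [List.mem_dedup]
    have h5 : ∑ x ∈ (p :: c').dedup.toFinset, a x.1 x.2 =
        ((p :: c').dedup.map fun x => a x.1 x.2).sum := sum_toFinset _ hdnd
    have h6 : ((p :: c').dedup.map fun x => a x.1 x.2).sum ≤
        (π.map fun x => a x.1 x.2).sum :=
      List.Sublist.sum_le_sum (hdπ.map _) fun _ _ => Nat.zero_le _
    rw [← h4] at h5
    omega

end LPPAux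

open LPPAux in
/-- The length of a longest nondecreasing subsequence of the bottom row of the
biword of `a` equals the last passage percolation time over down-right paths
from `(1,1)` to `(n,m)`. -/
theorem longest_nondecreasing_subseq_eq_lpp (n m : ℕ) (a : ℕ → ℕ → ℕ) :
    sSup {k | ∃ l : List ℕ, l.Sublist ((biword n m a).map Prod.snd) ∧
      l.Pairwise (· ≤ ·) ∧ k = l.length} =
    sSup {s | ∃ π, IsDRPath n m π ∧ s = (π.map fun p => a p.1 p.2).sum} := by
  have bddL : BddAbove {k | ∃ l : List ℕ, l.Sublist ((biword n m a).map Prod.snd) ∧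
      l.Pairwise (· ≤ ·) ∧ k = l.length} := by
    refine ⟨((biword n m a).map Prod.snd).length, ?_⟩
    rintro k ⟨l, h1, _, rfl⟩
    exact h1.length_le
  have bddR : BddAbove {s | ∃ π, IsDRPath n m π ∧ s = (π.map fun p => a p.1 p.2).sum} := by
    refine ⟨((allCells n m).map fun p => a p.1 p.2).sum, ?_⟩
    rintro s ⟨π, hπ, rfl⟩
    exact List.Sublist.sum_le_sum ((path_sublist_allCells hπ).map _) fun _ _ => Nat.zero_le _
  apply le_antisymm
  · refine csSup_le ⟨0, [], List.nil_sublist _, List.Pairwise.nil, rfl⟩ ?_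
    rintro k ⟨l, h1, h2, rfl⟩
    rcases le_direction h1 h2 with rfl | ⟨π, hπ, hle⟩
    · exact Nat.zero_le _
    · exact hle.trans (le_csSup bddR ⟨π, hπ, rfl⟩)
  · rcases Set.eq_empty_or_nonempty
        {s | ∃ π, IsDRPath n m π ∧ s = (π.map fun p => a p.1 p.2).sum} with hE | hNE
    · rw [hE, csSup_empty]
      exact bot_le
    · refine csSup_le hNE ?_
      rintro s ⟨π, hπ, rfl⟩
      obtain ⟨l, h1, h2, h3⟩ := exists_word (a := a) hπ
      rw [← h3]
      exact le_csSup bddL ⟨l, h1, h2, rfl⟩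
end
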